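/- arXiv:2007.10386 — 6 statements merged into one kernel-verified Lean document; each statement's English description precedes it below -/
import Mathlib

section
/- Let |ξ| < π/2, 0 ≤ ρ < 1 and 0 ≤ γ < 1. If f(z) = z + Σ_{n=2}^∞ a_n z^n belongs to 𝒜 and its coefficients satisfy Σ_{n=2}^∞ n [ (1-ρ)(n-1) sec ξ + (1-γ)(1 + nρ - ρ) ] |a_n| ≤ 1 - γ, then f belongs to the class 𝒦(ξ, γ, ρ). -/
noncomputable section

open Complex Real Set

/-- The open unit disk in the complex plane. -/
def unitDisk : Set ℂ := Metric.ball 0 1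

/-- The class 𝒜 of normalized analytic functions on the unit disk:
`f` analytic on `𝔻`, `f 0 = 0`, `f' 0 = 1`. -/
def NormalizedAnalytic (f : ℂ → ℂ) : Prop :=
  AnalyticOn ℂ f unitDisk ∧ f 0 = 0 ∧ deriv f 0 = 1

/-- The spirallike class `𝒮(ξ, γ, ρ)`. -/
def SpiralS (ξ γ ρ : ℝ) (f : ℂ → ℂ) : Prop :=
  NormalizedAnalytic f ∧ Set.InjOn f unitDisk ∧
    ∀ z ∈ unitDisk, z ≠ 0 →
      (1 - (ρ : ℂ)) * f z + (ρ : ℂ) * z * deriv f z ≠ 0 ∧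
      γ * Real.cos ξ <
        (Complex.exp (Complex.I * ξ) * (z * deriv f z) /
          ((1 - (ρ : ℂ)) * f z + (ρ : ℂ) * z * deriv f z)).re

/-- The convex spirallike class `𝒦(ξ, γ, ρ)`. -/
def SpiralK (ξ γ ρ : ℝ) (f : ℂ → ℂ) : Prop :=
  NormalizedAnalytic f ∧ Set.InjOn f unitDisk ∧
    ∀ z ∈ unitDisk,
      deriv f z + (ρ : ℂ) * z * deriv (deriv f) z ≠ 0 ∧
      γ * Real.cos ξ <
        (Complex.exp (Complex.I * ξ) * (z * deriv (deriv f) z + deriv f z) /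
          (deriv f z + (ρ : ℂ) * z * deriv (deriv f) z)).re

/-- The spirallike class `𝒮(ξ, γ)`. -/
def SpiralS0 (ξ γ : ℝ) (f : ℂ → ℂ) : Prop :=
  NormalizedAnalytic f ∧ Set.InjOn f unitDisk ∧
    ∀ z ∈ unitDisk, z ≠ 0 →
      f z ≠ 0 ∧
      γ * Real.cos ξ <
        (Complex.exp (Complex.I * ξ) * (z * deriv f z) / f z).re

/-- The convex spirallike class `𝒦(ξ, γ)`. -/
def SpiralK0 (ξ γ : ℝ) (f : ℂ → ℂ) : Prop :=
  NormalizedAnalytic f ∧ Set.InjOn f unitDisk ∧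
    ∀ z ∈ unitDisk,
      deriv f z ≠ 0 ∧
      γ * Real.cos ξ <
        (Complex.exp (Complex.I * ξ) *
          (1 + z * deriv (deriv f) z / deriv f z)).re

/-- The class `ℛ^τ(ϑ, δ)`. -/
def ClassR (τ : ℂ) (ϑ δ : ℝ) (f : ℂ → ℂ) : Prop :=
  NormalizedAnalytic f ∧ Set.InjOn f unitDisk ∧
    ∀ z ∈ unitDisk,
      ‖(((1 - (ϑ : ℂ)) * (if z = 0 then 1 else f z / z) + (ϑ : ℂ) * deriv f z - 1) /
          (2 * τ * (1 - (δ : ℂ)) +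
            (1 - (ϑ : ℂ)) * (if z = 0 then 1 else f z / z) + (ϑ : ℂ) * deriv f z - 1))‖ < 1

/-- The Pascal distribution series
`Θ_q^m(z) = z + ∑_{n=2}^∞ C(n+m-2, m-1) q^(n-1) (1-q)^m z^n`. -/
def pascalTheta (m : ℕ) (q : ℝ) : ℂ → ℂ := fun z =>
  z + ∑' n : ℕ, ((n + m).choose (m - 1) : ℂ) * (q : ℂ) ^ (n + 1) * (1 - (q : ℂ)) ^ m * z ^ (n + 2)

/-- The integral operator `𝒢_q^m(z) = ∫_0^z Θ_q^m(t)/t dt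
= z + ∑_{n=2}^∞ C(n+m-2, m-1) q^(n-1) (1-q)^m z^n / n`. -/
def pascalG (m : ℕ) (q : ℝ) : ℂ → ℂ := fun z =>
  z + ∑' n : ℕ, ((n + m).choose (m - 1) : ℂ) * (q : ℂ) ^ (n + 1) * (1 - (q : ℂ)) ^ m *
    z ^ (n + 2) / ((n : ℂ) + 2)

set_option maxHeartbeats 2000000 in
/-- sufficient coefficient condition for membership in `𝒦(ξ, γ, ρ)`. -/
theorem stmt1 (ξ ρ γ : ℝ) (hξ : |ξ| < π / 2) (hρ0 : 0 ≤ ρ) (hρ1 : ρ < 1)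
    (hγ0 : 0 ≤ γ) (hγ1 : γ < 1) (f : ℂ → ℂ) (a : ℕ → ℂ)
    (hf : AnalyticOn ℂ f unitDisk)
    (hrep : ∀ z ∈ unitDisk, HasSum (fun n : ℕ => a (n + 2) * z ^ (n + 2)) (f z - z))
    (hsummable : Summable (fun n : ℕ =>
      ((n : ℝ) + 2) * ((1 - ρ) * ((n : ℝ) + 1) * (Real.cos ξ)⁻¹ +
        (1 - γ) * (1 + ((n : ℝ) + 2) * ρ - ρ)) * ‖a (n + 2)‖))
    (hle : ∑' n : ℕ,
      ((n : ℝ) + 2) * ((1 - ρ) * ((n : ℝ) + 1) * (Real.cos ξ)⁻¹ +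
        (1 - γ) * (1 + ((n : ℝ) + 2) * ρ - ρ)) * ‖a (n + 2)‖ ≤ 1 - γ) :
    SpiralK ξ γ ρ f := by
  have hcos : 0 < Real.cos ξ := by
    have := abs_lt.mp hξ
    exact Real.cos_pos_of_mem_Ioo ⟨by linarith, by linarith⟩
  set K : ℝ := (1 - γ) * Real.cos ξ with hKdef
  have hK : 0 < K := mul_pos (by linarith) hcos
  set A : ℕ → ℝ := fun n => ‖a (n + 2)‖ with hAdef
  have hA : ∀ n, 0 ≤ A n := fun n => norm_nonneg _
  set W : ℕ → ℝ := fun n =>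
      ((n : ℝ) + 2) * ((1 - ρ) * ((n : ℝ) + 1) * (Real.cos ξ)⁻¹ +
        (1 - γ) * (1 + ((n : ℝ) + 2) * ρ - ρ)) * A n with hWdef
  have hWsummable : Summable W := by
    simp only [hWdef, hAdef]
    exact hsummable
  have hWle : ∑' n, W n ≤ 1 - γ := by
    refine le_trans (le_of_eq ?_) hle
    simp only [hWdef, hAdef]
  -- basic bounds on the bracket
  have hX : ∀ n : ℕ, (0:ℝ) ≤ (1 - ρ) * ((n : ℝ) + 1) * (Real.cos ξ)⁻¹ := by
    intro n
    have hn : (0:ℝ) ≤ (n:ℝ) := Nat.cast_nonneg n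
    exact mul_nonneg (mul_nonneg (by linarith) (by linarith)) (inv_nonneg.mpr hcos.le)
  have hY : ∀ n : ℕ, (1 - γ) ≤ (1 - γ) * (1 + ((n : ℝ) + 2) * ρ - ρ) := by
    intro n
    have hn : (0:ℝ) ≤ (n:ℝ) := Nat.cast_nonneg n
    nlinarith [mul_nonneg (mul_nonneg (show (0:ℝ) ≤ 1 - γ by linarith) (show (0:ℝ) ≤ (n:ℝ) + 1 by linarith)) hρ0]
  have hW1 : ∀ n : ℕ, (((n : ℝ) + 2) * A n) * (1 - γ) ≤ W n := by
    intro n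
    have hn : (0:ℝ) ≤ (n:ℝ) := Nat.cast_nonneg n
    have hXY : (1 - γ) ≤ (1 - ρ) * ((n : ℝ) + 1) * (Real.cos ξ)⁻¹ +
        (1 - γ) * (1 + ((n : ℝ) + 2) * ρ - ρ) := by
      have := hX n; have := hY n; linarith
    have := mul_le_mul_of_nonneg_left hXY
      (mul_nonneg (by linarith : (0:ℝ) ≤ (n:ℝ) + 2) (hA n))
    simp only [hWdef]
    nlinarith [this]
  have hW2 : ∀ n : ℕ, (((n : ℝ) + 2) * (((n:ℝ) + 1) * A n)) * ((1 - ρ) * (Real.cos ξ)⁻¹) ≤ W n := by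
    intro n
    have hn : (0:ℝ) ≤ (n:ℝ) := Nat.cast_nonneg n
    have hY0 : (0:ℝ) ≤ (1 - γ) * (1 + ((n : ℝ) + 2) * ρ - ρ) := le_trans (by linarith) (hY n)
    have hXY : ((n:ℝ) + 1) * ((1 - ρ) * (Real.cos ξ)⁻¹)
        ≤ (1 - ρ) * ((n : ℝ) + 1) * (Real.cos ξ)⁻¹ +
          (1 - γ) * (1 + ((n : ℝ) + 2) * ρ - ρ) := by nlinarith [mul_nonneg (mul_nonneg (show (0:ℝ) ≤ 1 - γ by linarith) (show (0:ℝ) ≤ (n:ℝ) + 1 by linarith)) hρ0]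
    have := mul_le_mul_of_nonneg_left hXY
      (mul_nonneg (by linarith : (0:ℝ) ≤ (n:ℝ) + 2) (hA n))
    simp only [hWdef]
    nlinarith [this]
  have hWnonneg : ∀ n : ℕ, 0 ≤ W n := by
    intro n
    refine le_trans ?_ (hW1 n)
    have hn : (0:ℝ) ≤ (n:ℝ) := Nat.cast_nonneg n
    exact mul_nonneg (mul_nonneg (by linarith) (hA n)) (by linarith)
  have hS1 : Summable (fun n : ℕ => ((n : ℝ) + 2) * A n) := by
    rw [← summable_mul_right_iff (show (1:ℝ) - γ ≠ 0 by linarith)]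
    refine Summable.of_nonneg_of_le (fun n => ?_) hW1 hWsummable
    have hn : (0:ℝ) ≤ (n:ℝ) := Nat.cast_nonneg n
    exact mul_nonneg (mul_nonneg (by linarith) (hA n)) (by linarith)
  have hS2 : Summable (fun n : ℕ => ((n : ℝ) + 2) * (((n:ℝ) + 1) * A n)) := by
    rw [← summable_mul_right_iff
      (show (1 - ρ) * (Real.cos ξ)⁻¹ ≠ 0 from
        ne_of_gt (mul_pos (by linarith) (inv_pos.mpr hcos)))]
    refine Summable.of_nonneg_of_le (fun n => ?_) hW2 hWsummable
    have hn : (0:ℝ) ≤ (n:ℝ) := Nat.cast_nonneg n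
    have h1 : (0:ℝ) ≤ ((n:ℝ) + 2) * (((n:ℝ) + 1) * A n) :=
      mul_nonneg (by linarith) (mul_nonneg (by linarith) (hA n))
    have h2 : (0:ℝ) ≤ (1 - ρ) * (Real.cos ξ)⁻¹ :=
      mul_nonneg (by linarith) (inv_nonneg.mpr hcos.le)
    exact mul_nonneg h1 h2
  have hSig1 : ∑' n : ℕ, ((n : ℝ) + 2) * A n ≤ 1 := by
    have h := Summable.tsum_le_tsum hW1 (hS1.mul_right _) hWsummable
    rw [tsum_mul_right] at h
    have h2 := h.trans hWle
    nlinarith [h2]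
  have hopen : IsOpen unitDisk := Metric.isOpen_ball
  have hconn : IsPreconnected unitDisk := (convex_ball (0:ℂ) 1).isPreconnected
  have h0mem : (0:ℂ) ∈ unitDisk := by simp [unitDisk]
  have hmemr : ∀ z : ℂ, z ∈ unitDisk → ‖z‖ < 1 := by
    intro z hz; simpa [unitDisk] using mem_ball_zero_iff.mp hz
  have hnorm1 : ∀ (n : ℕ) (z : ℂ), ‖((n:ℂ)+2) * a (n+2) * z^(n+1)‖
      = ((n : ℝ) + 2) * A n * ‖z‖^(n+1) := by
    intro n z
    rw [norm_mul, norm_mul, norm_pow, hAdef]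
    norm_cast
  have hnorm2 : ∀ (n : ℕ) (z : ℂ), ‖((n:ℂ)+2) * ((n:ℂ)+1) * a (n+2) * z^n‖
      = ((n : ℝ) + 2) * (((n:ℝ)+1) * A n) * ‖z‖^n := by
    intro n z
    rw [norm_mul, norm_mul, norm_mul, norm_pow, hAdef]
    have h1 : ‖(n:ℂ)+2‖ = (n:ℝ)+2 := by norm_cast
    have h2 : ‖(n:ℂ)+1‖ = (n:ℝ)+1 := by norm_cast
    rw [h1, h2]; ring
  set D1 : ℂ → ℂ := fun z => ∑' n : ℕ, ((n:ℂ)+2) * a (n+2) * z^(n+1) with hD1def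
  set D2 : ℂ → ℂ := fun z => ∑' n : ℕ, ((n:ℂ)+2) * ((n:ℂ)+1) * a (n+2) * z^n with hD2def
  have htsum1 : ∀ z ∈ unitDisk,
      HasDerivAt (fun w => ∑' n : ℕ, a (n+2) * w^(n+2)) (D1 z) z := by
    intro z hz
    simp only [hD1def]
    refine hasDerivAt_tsum_of_isPreconnected (y₀ := 0)
      (g := fun (n : ℕ) (w : ℂ) => a (n+2) * w^(n+2))
      (g' := fun (n : ℕ) (y : ℂ) => ((n:ℂ)+2) * a (n+2) * y^(n+1)) hS1 hopen hconn
      (fun n y _ => ?_) (fun n y hy => ?_) h0mem ?_ hz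
    · have := (hasDerivAt_pow (n+2) y).const_mul (a (n+2))
      refine this.congr_deriv ?_; push_cast; ring
    · rw [hnorm1 n y]
      have hy1 : ‖y‖^(n+1) ≤ 1 := pow_le_one₀ (norm_nonneg _) (hmemr y hy).le
      calc ((n:ℝ)+2) * A n * ‖y‖^(n+1) ≤ ((n:ℝ)+2) * A n * 1 :=
            mul_le_mul_of_nonneg_left hy1
              (mul_nonneg (by positivity) (hA n))
        _ = ((n:ℝ)+2) * A n := mul_one _
    · apply summable_of_ne_finset_zero (s := ∅)
      intro n _
      simp
  have hfeq : ∀ z ∈ unitDisk, f z = z + ∑' n : ℕ, a (n+2) * z^(n+2) := by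
    intro z hz
    have := (hrep z hz).tsum_eq
    rw [this]; ring
  have hderiv1 : ∀ z ∈ unitDisk, HasDerivAt f (1 + D1 z) z := by
    intro z hz
    have hbig : HasDerivAt (fun w => w + ∑' n : ℕ, a (n+2) * w^(n+2)) (1 + D1 z) z :=
      (hasDerivAt_id z).add (htsum1 z hz)
    refine hbig.congr_of_eventuallyEq ?_
    filter_upwards [hopen.mem_nhds hz] with w hw
    exact hfeq w hw
  have hdf : ∀ z ∈ unitDisk, deriv f z = 1 + D1 z := fun z hz => (hderiv1 z hz).deriv
  have htsum2 : ∀ z ∈ unitDisk,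
      HasDerivAt (fun w => ∑' n : ℕ, ((n:ℂ)+2) * a (n+2) * w^(n+1)) (D2 z) z := by
    intro z hz
    simp only [hD2def]
    refine hasDerivAt_tsum_of_isPreconnected (y₀ := 0)
      (g := fun (n : ℕ) (w : ℂ) => ((n:ℂ)+2) * a (n+2) * w^(n+1))
      (g' := fun (n : ℕ) (y : ℂ) => ((n:ℂ)+2) * ((n:ℂ)+1) * a (n+2) * y^n) hS2 hopen hconn
      (fun n y _ => ?_) (fun n y hy => ?_) h0mem ?_ hz
    · have := (hasDerivAt_pow (n+1) y).const_mul (((n:ℂ)+2) * a (n+2))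
      refine this.congr_deriv ?_; push_cast; ring
    · rw [hnorm2 n y]
      have hy1 : ‖y‖^n ≤ 1 := pow_le_one₀ (norm_nonneg _) (hmemr y hy).le
      calc ((n:ℝ)+2) * (((n:ℝ)+1) * A n) * ‖y‖^n ≤ ((n:ℝ)+2) * (((n:ℝ)+1) * A n) * 1 :=
            mul_le_mul_of_nonneg_left hy1
              (mul_nonneg (by positivity) (mul_nonneg (by positivity) (hA n)))
        _ = ((n:ℝ)+2) * (((n:ℝ)+1) * A n) := mul_one _
    · apply summable_of_ne_finset_zero (s := ∅)
      intro n _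
      simp
  have hderiv2 : ∀ z ∈ unitDisk, HasDerivAt (deriv f) (D2 z) z := by
    intro z hz
    have hbig : HasDerivAt (fun w => 1 + D1 w) (D2 z) z := by
      simp only [hD1def]
      simpa using (htsum2 z hz)
    refine hbig.congr_of_eventuallyEq ?_
    filter_upwards [hopen.mem_nhds hz] with w hw
    exact hdf w hw
  have hddf : ∀ z ∈ unitDisk, deriv (deriv f) z = D2 z := fun z hz => (hderiv2 z hz).deriv
  have hsumm1 : ∀ z : ℂ, ‖z‖ ≤ 1 → Summable (fun n : ℕ => ‖((n:ℂ)+2) * a (n+2) * z^(n+1)‖) := by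
    intro z hz
    refine Summable.of_nonneg_of_le (fun n => norm_nonneg _) (fun n => ?_) hS1
    rw [hnorm1 n z]
    have hy1 : ‖z‖^(n+1) ≤ 1 := pow_le_one₀ (norm_nonneg _) hz
    calc ((n:ℝ)+2) * A n * ‖z‖^(n+1) ≤ ((n:ℝ)+2) * A n * 1 :=
          mul_le_mul_of_nonneg_left hy1 (mul_nonneg (by positivity) (hA n))
      _ = ((n:ℝ)+2) * A n := mul_one _
  have hsumm2 : ∀ z : ℂ, ‖z‖ ≤ 1 →
      Summable (fun n : ℕ => ‖((n:ℂ)+2) * ((n:ℂ)+1) * a (n+2) * z^n‖) := by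
    intro z hz
    refine Summable.of_nonneg_of_le (fun n => norm_nonneg _) (fun n => ?_) hS2
    rw [hnorm2 n z]
    have hy1 : ‖z‖^n ≤ 1 := pow_le_one₀ (norm_nonneg _) hz
    calc ((n:ℝ)+2) * (((n:ℝ)+1) * A n) * ‖z‖^n ≤ ((n:ℝ)+2) * (((n:ℝ)+1) * A n) * 1 :=
          mul_le_mul_of_nonneg_left hy1
            (mul_nonneg (by positivity) (mul_nonneg (by positivity) (hA n)))
      _ = ((n:ℝ)+2) * (((n:ℝ)+1) * A n) := mul_one _
  have hf0 : f 0 = 0 := by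
    have h := hrep 0 h0mem
    have h2 : HasSum (fun n : ℕ => a (n + 2) * (0:ℂ) ^ (n + 2)) 0 := by
      have : (fun n : ℕ => a (n + 2) * (0:ℂ) ^ (n + 2)) = fun _ => 0 := by
        funext n; simp
      rw [this]; exact hasSum_zero
    have := h.unique h2
    simpa using this
  have hdf0 : deriv f 0 = 1 := by
    rw [hdf 0 h0mem]
    simp only [hD1def]
    have : (fun n : ℕ => ((n:ℂ)+2) * a (n+2) * (0:ℂ)^(n+1)) = fun _ => 0 := by
      funext n; simp
    rw [this, tsum_zero, add_zero]
  have hinj : Set.InjOn f unitDisk := by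
    intro z1 hz1 z2 hz2 hfz
    by_contra hne
    set M : ℝ := max ‖z1‖ ‖z2‖ with hMdef
    have hM0 : 0 ≤ M := le_trans (norm_nonneg _) (le_max_left _ _)
    have hM1 : M < 1 := max_lt (hmemr z1 hz1) (hmemr z2 hz2)
    have hd : (0:ℝ) < ‖z1 - z2‖ := by
      rw [norm_pos_iff, sub_ne_zero]; exact hne
    have hsub : HasSum (fun n : ℕ => a (n+2) * (z1^(n+2) - z2^(n+2))) (z2 - z1) := by
      have h := (hrep z1 hz1).sub (hrep z2 hz2)
      simp only [← mul_sub] at h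
      have e : f z1 - z1 - (f z2 - z2) = z2 - z1 := by rw [hfz]; ring
      rw [e] at h; exact h
    have hbound : ∀ n : ℕ, ‖a (n+2) * (z1^(n+2) - z2^(n+2))‖
        ≤ ((n:ℝ)+2) * A n * (M^(n+1) * ‖z1 - z2‖) := by
      intro n
      rw [norm_mul]
      have hgeom : ‖z1^(n+2) - z2^(n+2)‖ ≤ ((n:ℝ)+2) * M^(n+1) * ‖z1 - z2‖ := by
        have hid : (∑ i ∈ Finset.range (n+2), z1 ^ i * z2 ^ (n + 1 - i)) * (z1 - z2)
            = z1 ^ (n+2) - z2 ^ (n+2) := geom_sum₂_mul z1 z2 (n+2)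
        rw [← hid, norm_mul]
        gcongr
        calc ‖∑ i ∈ Finset.range (n+2), z1 ^ i * z2 ^ (n + 1 - i)‖
            ≤ ∑ i ∈ Finset.range (n+2), ‖z1 ^ i * z2 ^ (n + 1 - i)‖ := norm_sum_le _ _
          _ ≤ ∑ _i ∈ Finset.range (n+2), M^(n+1) := by
              apply Finset.sum_le_sum
              intro i hi
              rw [norm_mul, norm_pow, norm_pow]
              calc ‖z1‖ ^ i * ‖z2‖ ^ (n + 1 - i) ≤ M ^ i * M ^ (n+1-i) :=
                    mul_le_mul (pow_le_pow_left₀ (norm_nonneg _) (le_max_left _ _) i)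
                      (pow_le_pow_left₀ (norm_nonneg _) (le_max_right _ _) _)
                      (pow_nonneg (norm_nonneg _) _) (pow_nonneg hM0 _)
                _ = M ^ (n+1) := by
                    rw [← pow_add]
                    congr 1
                    have := Finset.mem_range.mp hi
                    omega
          _ = ((n:ℝ)+2) * M^(n+1) := by
              rw [Finset.sum_const, Finset.card_range]
              push_cast; ring
      calc ‖a (n+2)‖ * ‖z1^(n+2) - z2^(n+2)‖
          ≤ ‖a (n+2)‖ * (((n:ℝ)+2) * M^(n+1) * ‖z1 - z2‖) := by
            exact mul_le_mul_of_nonneg_left hgeom (norm_nonneg _)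
        _ = ((n:ℝ)+2) * A n * (M^(n+1) * ‖z1 - z2‖) := by rw [hAdef]; ring
    have hMpow : ∀ n : ℕ, M^(n+1) ≤ M := by
      intro n
      calc M^(n+1) ≤ M^1 := pow_le_pow_of_le_one hM0 hM1.le (by omega)
        _ = M := pow_one M
    have hle2 : ∀ n : ℕ, ((n:ℝ)+2) * A n * (M^(n+1) * ‖z1 - z2‖)
        ≤ ((n:ℝ)+2) * A n * (M * ‖z1 - z2‖) := by
      intro n
      refine mul_le_mul_of_nonneg_left ?_ (mul_nonneg (by positivity) (hA n))
      exact mul_le_mul_of_nonneg_right (hMpow n) (norm_nonneg _)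
    have hsummaj : Summable (fun n : ℕ => ((n:ℝ)+2) * A n * (M^(n+1) * ‖z1 - z2‖)) := by
      refine Summable.of_nonneg_of_le
        (fun n => mul_nonneg (mul_nonneg (by positivity) (hA n))
          (mul_nonneg (pow_nonneg hM0 _) (norm_nonneg _)))
        hle2 (hS1.mul_right (M * ‖z1 - z2‖))
    have hbsum : Summable (fun n : ℕ => ‖a (n+2) * (z1^(n+2) - z2^(n+2))‖) :=
      Summable.of_nonneg_of_le (fun n => norm_nonneg _) hbound hsummaj
    have h1 : ‖z2 - z1‖ ≤ ∑' n : ℕ, ((n:ℝ)+2) * A n * (M^(n+1) * ‖z1 - z2‖) := by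
      rw [← hsub.tsum_eq]
      exact le_trans (norm_tsum_le_tsum_norm hbsum) (Summable.tsum_le_tsum hbound hbsum hsummaj)
    have h2 : ∑' n : ℕ, ((n:ℝ)+2) * A n * (M^(n+1) * ‖z1 - z2‖)
        ≤ ∑' n : ℕ, ((n:ℝ)+2) * A n * (M * ‖z1 - z2‖) :=
      Summable.tsum_le_tsum hle2 hsummaj (hS1.mul_right _)
    have h3 : ∑' n : ℕ, ((n:ℝ)+2) * A n * (M * ‖z1 - z2‖)
        = (∑' n : ℕ, ((n:ℝ)+2) * A n) * (M * ‖z1 - z2‖) := tsum_mul_right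
    have h4 : (∑' n : ℕ, ((n:ℝ)+2) * A n) * (M * ‖z1 - z2‖) ≤ 1 * (M * ‖z1 - z2‖) :=
      mul_le_mul_of_nonneg_right hSig1 (mul_nonneg hM0 (norm_nonneg _))
    have hchain : ‖z1 - z2‖ ≤ M * ‖z1 - z2‖ := by
      conv_lhs => rw [norm_sub_rev]
      rw [h3] at h2
      rw [one_mul] at h4
      exact h1.trans (h2.trans h4)
    have := mul_lt_mul_of_pos_right hM1 hd
    rw [one_mul] at this
    linarith
  refine ⟨⟨hf, hf0, hdf0⟩, hinj, ?_⟩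
  intro z hz
  have hr1 : ‖z‖ < 1 := hmemr z hz
  set r : ℝ := ‖z‖ with hrdef
  have hr0 : 0 ≤ r := norm_nonneg _
  set S1 : ℂ := D1 z with hS1def'
  set S2 : ℂ := z * D2 z with hS2def'
  set T1 : ℝ := ∑' n : ℕ, ((n:ℝ)+2) * A n * r^(n+1) with hT1def
  set T2 : ℝ := ∑' n : ℕ, ((n:ℝ)+2) * (((n:ℝ)+1) * A n) * r^(n+1) with hT2def
  have hu1 : Summable (fun n : ℕ => ((n:ℝ)+2) * A n * r^(n+1)) := by
    refine Summable.of_nonneg_of_le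
      (fun n => mul_nonneg (mul_nonneg (by positivity) (hA n)) (pow_nonneg hr0 _))
      (fun n => ?_) hS1
    have hy1 : r^(n+1) ≤ 1 := pow_le_one₀ hr0 hr1.le
    calc ((n:ℝ)+2) * A n * r^(n+1) ≤ ((n:ℝ)+2) * A n * 1 :=
          mul_le_mul_of_nonneg_left hy1 (mul_nonneg (by positivity) (hA n))
      _ = ((n:ℝ)+2) * A n := mul_one _
  have hu2 : Summable (fun n : ℕ => ((n:ℝ)+2) * (((n:ℝ)+1) * A n) * r^(n+1)) := by
    refine Summable.of_nonneg_of_le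
      (fun n => mul_nonneg (mul_nonneg (by positivity) (mul_nonneg (by positivity) (hA n)))
        (pow_nonneg hr0 _))
      (fun n => ?_) hS2
    have hy1 : r^(n+1) ≤ 1 := pow_le_one₀ hr0 hr1.le
    calc ((n:ℝ)+2) * (((n:ℝ)+1) * A n) * r^(n+1) ≤ ((n:ℝ)+2) * (((n:ℝ)+1) * A n) * 1 :=
          mul_le_mul_of_nonneg_left hy1
            (mul_nonneg (by positivity) (mul_nonneg (by positivity) (hA n)))
      _ = ((n:ℝ)+2) * (((n:ℝ)+1) * A n) := mul_one _
  have hT1nn : 0 ≤ T1 := tsum_nonneg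
    (fun n => mul_nonneg (mul_nonneg (by positivity) (hA n)) (pow_nonneg hr0 _))
  have hT2nn : 0 ≤ T2 := tsum_nonneg
    (fun n => mul_nonneg (mul_nonneg (by positivity) (mul_nonneg (by positivity) (hA n)))
      (pow_nonneg hr0 _))
  have hnS1 : ‖S1‖ ≤ T1 := by
    rw [hS1def']
    simp only [hD1def]
    refine le_trans (norm_tsum_le_tsum_norm (hsumm1 z hr1.le)) (le_of_eq ?_)
    exact tsum_congr (fun n => hnorm1 n z)
  have hnS2 : ‖S2‖ ≤ T2 := by
    have heq : S2 = ∑' n : ℕ, z * (((n:ℂ)+2) * ((n:ℂ)+1) * a (n+2) * z^n) := by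
      rw [hS2def']
      simp only [hD2def]
      rw [tsum_mul_left]
    rw [heq]
    have hsz : Summable (fun n : ℕ => ‖z * (((n:ℂ)+2) * ((n:ℂ)+1) * a (n+2) * z^n)‖) := by
      simpa only [norm_mul] using (hsumm2 z hr1.le).mul_left ‖z‖
    refine le_trans (norm_tsum_le_tsum_norm hsz) (le_of_eq ?_)
    refine tsum_congr (fun n => ?_)
    rw [norm_mul, hnorm2 n z, ← hrdef]
    ring
  have hcomb : ((1-ρ) + K*ρ) * T2 + K * T1 ≤ r * K := by
    have hterm : ∀ n : ℕ,
        ((1-ρ) + K*ρ) * (((n:ℝ)+2) * (((n:ℝ)+1) * A n) * r^(n+1))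
          + K * (((n:ℝ)+2) * A n * r^(n+1)) ≤ r * (Real.cos ξ * W n) := by
      intro n
      have hrn : r^(n+1) ≤ r := by
        calc r^(n+1) ≤ r^1 := pow_le_pow_of_le_one hr0 hr1.le (by omega)
          _ = r := pow_one r
      have hn : (0:ℝ) ≤ (n:ℝ) := Nat.cast_nonneg n
      have hB : (0:ℝ) ≤ ((n:ℝ)+2) * ((1-ρ)*((n:ℝ)+1) + K*(1+((n:ℝ)+1)*ρ)) * A n := by
        refine mul_nonneg (mul_nonneg (by linarith) ?_) (hA n)
        have h1 : (0:ℝ) ≤ (1-ρ)*((n:ℝ)+1) := mul_nonneg (by linarith) (by linarith)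
        have h2 : (0:ℝ) ≤ K*(1+((n:ℝ)+1)*ρ) :=
          mul_nonneg hK.le (by nlinarith)
        linarith
      have hL : ((1-ρ) + K*ρ) * (((n:ℝ)+2) * (((n:ℝ)+1) * A n) * r^(n+1))
          + K * (((n:ℝ)+2) * A n * r^(n+1))
          = (((n:ℝ)+2) * ((1-ρ)*((n:ℝ)+1) + K*(1+((n:ℝ)+1)*ρ)) * A n) * r^(n+1) := by
        ring
      have hR : r * (Real.cos ξ * W n)
          = (((n:ℝ)+2) * ((1-ρ)*((n:ℝ)+1) + K*(1+((n:ℝ)+1)*ρ)) * A n) * r := by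
        simp only [hWdef, hKdef]
        field_simp
        ring
      rw [hL, hR]
      exact mul_le_mul_of_nonneg_left hrn hB
    have hls : Summable (fun n : ℕ =>
        ((1-ρ) + K*ρ) * (((n:ℝ)+2) * (((n:ℝ)+1) * A n) * r^(n+1))
          + K * (((n:ℝ)+2) * A n * r^(n+1))) :=
      (hu2.mul_left _).add (hu1.mul_left _)
    have hrs : Summable (fun n : ℕ => r * (Real.cos ξ * W n)) :=
      (hWsummable.mul_left _).mul_left _
    have h := Summable.tsum_le_tsum hterm hls hrs
    rw [Summable.tsum_add (hu2.mul_left _) (hu1.mul_left _), tsum_mul_left, tsum_mul_left,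
      tsum_mul_left, tsum_mul_left] at h
    refine le_trans h ?_
    have hstep : Real.cos ξ * ∑' n, W n ≤ Real.cos ξ * (1 - γ) :=
      mul_le_mul_of_nonneg_left hWle hcos.le
    calc r * (Real.cos ξ * ∑' n, W n) ≤ r * (Real.cos ξ * (1-γ)) :=
          mul_le_mul_of_nonneg_left hstep hr0
      _ = r * K := by rw [hKdef]; ring
  have hLT : ((1-ρ) + K*ρ) * T2 + K * T1 < K := by
    have : r * K < K := by nlinarith [mul_pos (show (0:ℝ) < 1 - r by linarith) hK]
    linarith
  have hT12 : T1 + ρ * T2 < 1 := by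
    nlinarith [mul_nonneg (show (0:ℝ) ≤ 1 - ρ by linarith) hT2nn,
      mul_nonneg hK.le (mul_nonneg hρ0 hT2nn)]
  have hkey : (1-ρ) * T2 < K * (1 - (T1 + ρ*T2)) := by nlinarith [hLT]
  have hdfz : deriv f z = 1 + S1 := by rw [hdf z hz, hS1def']
  have hddfz : z * deriv (deriv f) z = S2 := by rw [hddf z hz, hS2def']
  set v : ℂ := 1 + S1 + (ρ:ℂ) * S2 with hvdef
  have hvnorm : 1 - (T1 + ρ*T2) ≤ ‖v‖ := by
    have h1 : ‖S1 + (ρ:ℂ)*S2‖ ≤ T1 + ρ*T2 := by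
      calc ‖S1 + (ρ:ℂ)*S2‖ ≤ ‖S1‖ + ‖(ρ:ℂ)*S2‖ := norm_add_le _ _
        _ = ‖S1‖ + ρ * ‖S2‖ := by
            rw [norm_mul, Complex.norm_real, Real.norm_of_nonneg hρ0]
        _ ≤ T1 + ρ*T2 := by
            have := mul_le_mul_of_nonneg_left hnS2 hρ0
            linarith [hnS1]
    have h2 : (1:ℝ) ≤ ‖v‖ + ‖S1 + (ρ:ℂ)*S2‖ := by
      have hveq : (1:ℂ) = v - (S1 + (ρ:ℂ)*S2) := by rw [hvdef]; ring
      calc (1:ℝ) = ‖(1:ℂ)‖ := by simp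
        _ = ‖v - (S1 + (ρ:ℂ)*S2)‖ := by rw [← hveq]
        _ ≤ ‖v‖ + ‖S1 + (ρ:ℂ)*S2‖ := norm_sub_le _ _
    linarith
  have hvpos : 0 < ‖v‖ := by linarith
  have hvne : v ≠ 0 := by
    intro h; rw [h] at hvpos; simp at hvpos
  have hveq : deriv f z + (ρ:ℂ) * z * deriv (deriv f) z = v := by
    rw [hdfz, hvdef, ← hddfz]; ring
  refine ⟨by rw [hveq]; exact hvne, ?_⟩
  have hnum : z * deriv (deriv f) z + deriv f z = v + (1 - (ρ:ℂ)) * S2 := by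
    rw [hdfz, hddfz, hvdef]; ring
  set E : ℂ := Complex.exp (Complex.I * ξ) with hEdef
  have hEre : E.re = Real.cos ξ := by
    rw [hEdef, mul_comm]; exact Complex.exp_ofReal_mul_I_re ξ
  have hEnorm : ‖E‖ = 1 := by
    rw [hEdef]
    simp [Complex.norm_exp]
  have hfrac : E * (z * deriv (deriv f) z + deriv f z)
      / (deriv f z + (ρ:ℂ) * z * deriv (deriv f) z)
      = E + E * ((1 - (ρ:ℂ)) * S2) / v := by
    rw [hveq, hnum]
    field_simp
  rw [hfrac]
  have hwnorm : ‖E * ((1 - (ρ:ℂ)) * S2) / v‖ < K := by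
    rw [norm_div, norm_mul, norm_mul, hEnorm, one_mul]
    have h1ρ : ‖(1 : ℂ) - (ρ:ℂ)‖ = 1 - ρ := by
      have hcast : ((1:ℂ) - (ρ:ℂ)) = ((1 - ρ : ℝ) : ℂ) := by push_cast; ring
      rw [hcast, Complex.norm_real, Real.norm_of_nonneg (by linarith)]
    rw [h1ρ, div_lt_iff₀ hvpos]
    calc (1 - ρ) * ‖S2‖ ≤ (1 - ρ) * T2 :=
          mul_le_mul_of_nonneg_left hnS2 (by linarith)
      _ < K * (1 - (T1 + ρ*T2)) := hkey
      _ ≤ K * ‖v‖ := mul_le_mul_of_nonneg_left hvnorm hK.le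
  have hre : -K < (E * ((1 - (ρ:ℂ)) * S2) / v).re := by
    have h1 : |(E * ((1 - (ρ:ℂ)) * S2) / v).re| ≤ ‖E * ((1 - (ρ:ℂ)) * S2) / v‖ :=
      Complex.abs_re_le_norm _
    exact (abs_lt.mp (h1.trans_lt hwnorm)).1
  rw [Complex.add_re, hEre]
  rw [hKdef] at hre
  linarith
end
end

section
/- Let |ξ| < π/2 and 0 ≤ γ < 1. If f(z) = z + Σ_{n=2}^∞ a_n z^n belongs to 𝒜 and its coefficients satisfy Σ_{n=2}^∞ [ (n-1) sec ξ + (1-γ) ] |a_n| ≤ 1 - γ, then f belongs to the class 𝒮(ξ, γ). -/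
noncomputable section

open Complex Real Set

lemma abs_pow_sub_pow_le' (z w : ℂ) {ρ : ℝ} (hz : ‖z‖ ≤ ρ) (hw : ‖w‖ ≤ ρ)
    (m : ℕ) :
    ‖z ^ (m+1) - w ^ (m+1)‖ ≤ ((m:ℝ)+1) * ρ^m * ‖z - w‖ := by
  have hρ0 : 0 ≤ ρ := (norm_nonneg z).trans hz
  rw [← geom_sum₂_mul z w (m+1), norm_mul]
  refine mul_le_mul_of_nonneg_right ?_ (norm_nonneg _)
  calc ‖∑ i ∈ Finset.range (m+1), z ^ i * w ^ (m + 1 - 1 - i)‖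
      ≤ ∑ i ∈ Finset.range (m+1), ‖z ^ i * w ^ (m + 1 - 1 - i)‖ :=
        norm_sum_le _ _
    _ ≤ ∑ _i ∈ Finset.range (m+1), ρ ^ m := by
        refine Finset.sum_le_sum fun i hi => ?_
        rw [norm_mul, norm_pow, norm_pow]
        have him : i ≤ m := Nat.lt_succ_iff.mp (Finset.mem_range.mp hi)
        calc ‖z‖ ^ i * ‖w‖ ^ (m + 1 - 1 - i) ≤ ρ^i * ρ^(m+1-1-i) :=
              mul_le_mul (pow_le_pow_left₀ (norm_nonneg _) hz i)
                (pow_le_pow_left₀ (norm_nonneg _) hw _) (by positivity) (by positivity)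
          _ = ρ ^ m := by rw [← pow_add]; congr 1; omega
    _ = ((m:ℝ)+1) * ρ^m := by
        simp [Finset.sum_const, Finset.card_range, nsmul_eq_mul]


set_option maxHeartbeats 1000000 in
/-- sufficient coefficient condition for membership in `𝒮(ξ, γ)`. -/
theorem stmt2 (ξ γ : ℝ) (hξ : |ξ| < π / 2) (hγ0 : 0 ≤ γ) (hγ1 : γ < 1)
    (f : ℂ → ℂ) (a : ℕ → ℂ)
    (hf : AnalyticOn ℂ f unitDisk)
    (hrep : ∀ z ∈ unitDisk, HasSum (fun n : ℕ => a (n + 2) * z ^ (n + 2)) (f z - z))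
    (hsummable : Summable (fun n : ℕ =>
      (((n : ℝ) + 1) * (Real.cos ξ)⁻¹ + (1 - γ)) * ‖a (n + 2)‖))
    (hle : ∑' n : ℕ,
      (((n : ℝ) + 1) * (Real.cos ξ)⁻¹ + (1 - γ)) * ‖a (n + 2)‖ ≤ 1 - γ) :
    SpiralS0 ξ γ f := by
  have hcos : 0 < Real.cos ξ := Real.cos_pos_of_mem_Ioo ⟨(abs_lt.1 hξ).1, (abs_lt.1 hξ).2⟩
  have hcos1 : Real.cos ξ ≤ 1 := Real.cos_le_one ξ
  have hsec : (1:ℝ) ≤ (Real.cos ξ)⁻¹ := by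
    rw [one_le_inv_iff₀]; exact ⟨hcos, hcos1⟩
  set K : ℝ := (1 - γ) * Real.cos ξ with hKdef
  have hK : 0 < K := mul_pos (by linarith) hcos
  have hK1 : K ≤ 1 - γ := by nlinarith
  -- summability facts
  have habs0 : ∀ n : ℕ, (0:ℝ) ≤ ‖a (n+2)‖ := fun n => norm_nonneg _
  have hwle : ∀ n : ℕ, ((n:ℝ)+1) ≤ ((n : ℝ) + 1) * (Real.cos ξ)⁻¹ + (1 - γ) := by
    intro n
    nlinarith [hsec, (Nat.cast_nonneg n : (0:ℝ) ≤ n)]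
  have hS2sum : Summable (fun n : ℕ => ((n:ℝ)+1) * ‖a (n+2)‖) := by
    refine Summable.of_nonneg_of_le (fun n => by positivity) (fun n => ?_) hsummable
    exact mul_le_mul_of_nonneg_right (hwle n) (habs0 n)
  have hS1sum : Summable (fun n : ℕ => ‖a (n+2)‖) := by
    refine Summable.of_nonneg_of_le habs0 (fun n => ?_) hS2sum
    nlinarith [habs0 n, (Nat.cast_nonneg n : (0:ℝ) ≤ n)]
  set S1 : ℝ := ∑' n : ℕ, ‖a (n+2)‖ with hS1def
  set S2 : ℝ := ∑' n : ℕ, ((n:ℝ)+1) * ‖a (n+2)‖ with hS2def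
  have hS1nonneg : 0 ≤ S1 := tsum_nonneg habs0
  have hkey : S2 + K * S1 ≤ K := by
    have e : ∀ n : ℕ, ((n:ℝ)+1) * ‖a (n+2)‖ + K * ‖a (n+2)‖
        = Real.cos ξ * ((((n : ℝ) + 1) * (Real.cos ξ)⁻¹ + (1 - γ)) * ‖a (n+2)‖) := by
      intro n; field_simp; ring
    have h1 : S2 + K * S1
        = ∑' n : ℕ, (((n:ℝ)+1) * ‖a (n+2)‖ + K * ‖a (n+2)‖) := by
      rw [Summable.tsum_add hS2sum (hS1sum.mul_left K), tsum_mul_left]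
    rw [h1]
    calc ∑' n : ℕ, (((n:ℝ)+1) * ‖a (n+2)‖ + K * ‖a (n+2)‖)
        = Real.cos ξ * ∑' n : ℕ,
            ((((n : ℝ) + 1) * (Real.cos ξ)⁻¹ + (1 - γ)) * ‖a (n+2)‖) := by
          rw [← tsum_mul_left]; exact tsum_congr e
      _ ≤ Real.cos ξ * (1 - γ) := mul_le_mul_of_nonneg_left hle hcos.le
      _ = K := by rw [hKdef]; ring
  have hS1S2 : S1 ≤ S2 := by
    refine Summable.tsum_le_tsum (fun n => ?_) hS1sum hS2sum
    nlinarith [habs0 n, (Nat.cast_nonneg n : (0:ℝ) ≤ n)]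
  have hS1lt1 : S1 < 1 := by nlinarith
  -- the sum ∑ (n+2)|a (n+2)| is at most 1
  have hTsum : Summable (fun n : ℕ => ((n:ℝ)+2) * ‖a (n+2)‖) := by
    have h1 : Summable (fun n : ℕ => (((n:ℝ)+1) * ‖a (n+2)‖
        + ‖a (n+2)‖)) := hS2sum.add hS1sum
    refine h1.of_nonneg_of_le (fun n => by positivity) (fun n => by nlinarith [habs0 n])
  have hT : ∑' n : ℕ, ((n:ℝ)+2) * ‖a (n+2)‖ ≤ 1 := by
    have h2 : ∑' n : ℕ, ((n:ℝ)+2) * ‖a (n+2)‖ = S2 + S1 := by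
      rw [hS2def, hS1def, ← Summable.tsum_add hS2sum hS1sum]
      exact tsum_congr fun n => by ring
    nlinarith [mul_nonneg (by linarith : (0:ℝ) ≤ 1-K) (by linarith : (0:ℝ) ≤ 1-S1)]
  -- power series setup
  set c : ℕ → ℂ := fun n => if n = 0 then 0 else if n = 1 then 1 else a n with hcdef
  have hc2 : ∀ n : ℕ, c (n+2) = a (n+2) := fun n => by simp [hcdef]
  set p := FormalMultilinearSeries.ofScalars ℂ c with hpdef
  have hcsum : Summable (fun n : ℕ => ‖c n‖) := by
    refine (summable_nat_add_iff (f := fun n => ‖c n‖) 2).1 ?_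
    simpa [hc2] using hS1sum
  have hpn : ∀ n, ‖p n‖ = ‖c n‖ := fun n => FormalMultilinearSeries.ofScalars_norm ℂ c n
  have hrad : (1:ENNReal) ≤ p.radius := by
    have := p.le_radius_of_summable (r := 1) (by simpa [hpn] using hcsum)
    simpa using this
  have hball : Metric.eball (0:ℂ) 1 = unitDisk := by
    ext y
    rw [Metric.mem_eball, unitDisk, Metric.mem_ball, edist_dist, ← ENNReal.ofReal_one,
      ENNReal.ofReal_lt_ofReal_iff one_pos]
  have hps : ∀ y ∈ unitDisk, HasSum (fun n : ℕ => c n * y ^ n) (f y) := by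
    intro y hy
    have h2 : HasSum (fun n : ℕ => c (n+2) * y^(n+2)) (f y - y) := by
      simpa [hc2] using hrep y hy
    have h3 := (hasSum_nat_add_iff (f := fun n : ℕ => c n * y^n) 2).1 h2
    have h4 : (f y - y) + ∑ i ∈ Finset.range 2, c i * y ^ i = f y := by
      simp [hcdef, Finset.sum_range_succ]
    rwa [h4] at h3
  have hfp : HasFPowerSeriesOnBall f p 0 1 := by
    refine ⟨hrad, one_pos, @fun y hy => ?_⟩
    rw [zero_add]
    have h5 := hps _ (hball ▸ hy)
    have h6 : (fun n : ℕ => p n fun _ => y) = fun n : ℕ => c n * y ^ n := by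
      funext n; rw [hpdef, FormalMultilinearSeries.ofScalars_apply_eq, smul_eq_mul]
    rw [h6]
    exact h5
  have h0disk : (0:ℂ) ∈ unitDisk := Metric.mem_ball_self one_pos
  have hf0 : f 0 = 0 := by
    have h0 : HasSum (fun _ : ℕ => (0:ℂ)) (f 0) := by
      simpa [pow_succ] using hrep 0 h0disk
    exact h0.unique hasSum_zero
  have hd0 : deriv f 0 = 1 := by
    have h7 : p.coeff 1 = c 1 := by
      show p 1 (fun _ => 1) = c 1
      rw [hpdef, FormalMultilinearSeries.ofScalars_apply_eq]
      simp
    exact (hfp.hasFPowerSeriesAt.deriv).trans (h7.trans (by simp [hcdef]))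
  have hderiv : ∀ z ∈ unitDisk,
      HasSum (fun n : ℕ => ((n:ℂ)+1) * c (n+1) * z^(n+1)) (z * deriv f z) := by
    intro z hz
    have hz' : z ∈ Metric.eball (0:ℂ) 1 := hball.symm ▸ hz
    have h1 := (hfp.fderiv).hasSum hz'
    rw [zero_add] at h1
    have h2 := (ContinuousLinearMap.apply ℂ ℂ z).hasSum h1
    simp only [ContinuousLinearMap.apply_apply] at h2
    have hterm : (fun n : ℕ => (p.derivSeries n fun _ => z) z)
        = fun n : ℕ => ((n:ℂ)+1) * c (n+1) * z^(n+1) := by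
      funext n
      rw [p.derivSeries_apply_diag, FormalMultilinearSeries.ofScalars_apply_eq]
      push_cast [nsmul_eq_mul, smul_eq_mul]
      ring
    have hval : (fderiv ℂ f z) z = z * deriv f z := by
      have h3 : (fderiv ℂ f z) z = (fderiv ℂ f z) (z • 1) := by rw [smul_eq_mul, mul_one]
      rw [h3, ContinuousLinearMap.map_smul, smul_eq_mul]
      rfl
    rw [hterm, hval] at h2
    exact h2
  -- shifted derivative sum
  have hDz : ∀ z ∈ unitDisk, HasSum (fun n : ℕ => ((n:ℂ)+2) * a (n+2) * z^(n+2))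
      (z * deriv f z - z) := by
    intro z hz
    have h1 := hderiv z hz
    have h2 := (hasSum_nat_add_iff' (f := fun n : ℕ => ((n:ℂ)+1) * c (n+1) * z^(n+1)) 1).2 h1
    have h3 : (z * deriv f z) - ∑ i ∈ Finset.range 1, ((i:ℂ)+1) * c (i+1) * z^(i+1)
        = z * deriv f z - z := by
      simp [hcdef]
    rw [h3] at h2
    have h4 : (fun n : ℕ => (((n+1:ℕ):ℂ)+1) * c ((n+1)+1) * z^((n+1)+1))
        = fun n : ℕ => ((n:ℂ)+2) * a (n+2) * z^(n+2) := by
      funext n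
      rw [show (n+1)+1 = n+2 from rfl, hc2]
      push_cast
      ring
    rwa [h4] at h2
  -- injectivity
  have hinj : Set.InjOn f unitDisk := by
    intro z1 hz1 z2 hz2 hf12
    by_contra hne
    set ρ : ℝ := max (‖z1‖) (‖z2‖) with hρdef
    have hz1a : ‖z1‖ ≤ ρ := le_max_left _ _
    have hz2a : ‖z2‖ ≤ ρ := le_max_right _ _
    have hρ0 : 0 ≤ ρ := (norm_nonneg z1).trans hz1a
    have hρ1 : ρ < 1 := by
      apply max_lt
      · simpa [Complex.dist_eq] using (Metric.mem_ball.1 hz1)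
      · simpa [Complex.dist_eq] using (Metric.mem_ball.1 hz2)
    have hd : HasSum (fun n : ℕ => a (n+2) * (z1^(n+2) - z2^(n+2))) (z2 - z1) := by
      have h1 := (hrep z1 hz1).sub (hrep z2 hz2)
      have h2 : (fun n : ℕ => a (n+2) * z1^(n+2) - a (n+2) * z2^(n+2))
          = fun n : ℕ => a (n+2) * (z1^(n+2) - z2^(n+2)) :=
        funext fun n => (mul_sub _ _ _).symm
      rw [h2] at h1
      have h3 : (f z1 - z1) - (f z2 - z2) = z2 - z1 := by rw [hf12]; ring
      rwa [h3] at h1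
    have hδ : 0 < ‖z1 - z2‖ := (norm_pos_iff.mpr (sub_ne_zero.mpr hne))
    have hbound : ∀ n : ℕ, ‖a (n+2) * (z1^(n+2) - z2^(n+2))‖
        ≤ (((n:ℝ)+2) * ‖a (n+2)‖) * (ρ * ‖z1 - z2‖) := by
      intro n
      rw [norm_mul]
      have h4 := abs_pow_sub_pow_le' z1 z2 hz1a hz2a (n+1)
      have h5 : ρ^(n+1) ≤ ρ := by
        calc ρ^(n+1) ≤ ρ^1 := pow_le_pow_of_le_one hρ0 hρ1.le (by omega)
          _ = ρ := pow_one ρ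
      have h6 : ‖z1^(n+2) - z2^(n+2)‖ ≤ ((n:ℝ)+2) * (ρ * ‖z1 - z2‖) := by
        have h7 : (((n+1:ℕ):ℝ)+1) * ρ^(n+1) * ‖z1 - z2‖
            ≤ ((n:ℝ)+2) * (ρ * ‖z1 - z2‖) := by
          have hcast : (((n+1:ℕ):ℝ)+1) = (n:ℝ)+2 := by push_cast; ring
          rw [hcast, mul_assoc]
          exact mul_le_mul_of_nonneg_left (mul_le_mul_of_nonneg_right h5 hδ.le) (by positivity)
        calc ‖z1^(n+2) - z2^(n+2)‖
            ≤ (((n+1:ℕ):ℝ)+1) * ρ^(n+1) * ‖z1 - z2‖ := h4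
          _ ≤ _ := h7
      calc ‖a (n+2)‖ * ‖z1^(n+2) - z2^(n+2)‖
          ≤ ‖a (n+2)‖ * (((n:ℝ)+2) * (ρ * ‖z1 - z2‖)) :=
            mul_le_mul_of_nonneg_left h6 (habs0 n)
        _ = (((n:ℝ)+2) * ‖a (n+2)‖) * (ρ * ‖z1 - z2‖) := by ring
    have hsumd : Summable (fun n : ℕ => ‖a (n+2) * (z1^(n+2) - z2^(n+2))‖) :=
      Summable.of_nonneg_of_le (fun n => norm_nonneg _) hbound (hTsum.mul_right _)
    have h7 : ‖z2 - z1‖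
        ≤ ∑' n : ℕ, ‖a (n+2) * (z1^(n+2) - z2^(n+2))‖ := by
      rw [← hd.tsum_eq]
      have := norm_tsum_le_tsum_norm
        (f := fun n : ℕ => a (n+2) * (z1^(n+2) - z2^(n+2)))
        (by simpa using hsumd)
      simpa using this
    have h8 : ∑' n : ℕ, ‖a (n+2) * (z1^(n+2) - z2^(n+2))‖
        ≤ ∑' n : ℕ, (((n:ℝ)+2) * ‖a (n+2)‖) * (ρ * ‖z1 - z2‖) :=
      Summable.tsum_le_tsum hbound hsumd (hTsum.mul_right _)
    have h9 : ∑' n : ℕ, (((n:ℝ)+2) * ‖a (n+2)‖) * (ρ * ‖z1 - z2‖)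
        = (∑' n : ℕ, ((n:ℝ)+2) * ‖a (n+2)‖) * (ρ * ‖z1 - z2‖) :=
      tsum_mul_right
    have h10 : (∑' n : ℕ, ((n:ℝ)+2) * ‖a (n+2)‖) * (ρ * ‖z1 - z2‖)
        ≤ 1 * (ρ * ‖z1 - z2‖) :=
      mul_le_mul_of_nonneg_right hT (by positivity)
    have h11 : ‖z2 - z1‖ = ‖z1 - z2‖ := by
      exact norm_sub_rev z2 z1
    have h12 : ‖z2 - z1‖ ≤ ρ * ‖z1 - z2‖ := by
      calc ‖z2 - z1‖ ≤ _ := h7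
        _ ≤ _ := h8
        _ = _ := h9
        _ ≤ 1 * (ρ * ‖z1 - z2‖) := h10
        _ = ρ * ‖z1 - z2‖ := one_mul _
    rw [h11] at h12
    nlinarith [mul_pos hδ (by linarith : (0:ℝ) < 1 - ρ)]
  -- the pointwise condition
  have hmain : ∀ z ∈ unitDisk, z ≠ 0 → f z ≠ 0 ∧ γ * Real.cos ξ <
      (Complex.exp (Complex.I * ξ) * (z * deriv f z) / f z).re := by
    intro z hz hz0
    set r : ℝ := ‖z‖ with hrdef
    have hr0 : 0 < r := norm_pos_iff.mpr hz0
    have hr1 : r < 1 := by simpa [hrdef, Complex.dist_eq] using (Metric.mem_ball.1 hz)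
    have hsum1 : Summable (fun n : ℕ => ‖a (n+2) * z^(n+2)‖) := by
      refine Summable.of_nonneg_of_le (fun n => norm_nonneg _) (fun n => ?_) hS1sum
      rw [norm_mul, norm_pow]
      exact mul_le_of_le_one_right (habs0 n) (pow_le_one₀ hr0.le hr1.le)
    have hb1 : ‖f z - z‖ ≤ S1 * r := by
      rw [← (hrep z hz).tsum_eq]
      calc ‖∑' n : ℕ, a (n+2) * z^(n+2)‖
          ≤ ∑' n : ℕ, ‖a (n+2) * z^(n+2)‖ := by
            have := norm_tsum_le_tsum_norm (f := fun n : ℕ => a (n+2) * z^(n+2))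
              (by simpa using hsum1)
            simpa using this
        _ ≤ ∑' n : ℕ, ‖a (n+2)‖ * r := by
            refine Summable.tsum_le_tsum (fun n => ?_) hsum1 (hS1sum.mul_right r)
            rw [norm_mul, norm_pow]
            have h5 : (‖z‖)^(n+2) ≤ r := by
              calc (‖z‖)^(n+2) ≤ (‖z‖)^1 :=
                    pow_le_pow_of_le_one hr0.le hr1.le (by omega)
                _ = r := pow_one _
            exact mul_le_mul_of_nonneg_left h5 (habs0 n)
        _ = S1 * r := by rw [tsum_mul_right]
    have hfz : r - S1 * r ≤ ‖f z‖ := by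
      have h2 : r ≤ ‖f z‖ + ‖f z - z‖ := by
        calc r = ‖f z - (f z - z)‖ := by rw [hrdef]; congr 1; ring
          _ ≤ ‖f z‖ + ‖f z - z‖ := norm_sub_le _ _
      linarith [hb1]
    have hfzne : f z ≠ 0 := by
      intro h
      rw [h, norm_zero] at hfz
      nlinarith [hr0, hS1lt1]
    have hNsum : HasSum (fun n : ℕ => ((n:ℂ)+1) * a (n+2) * z^(n+2)) (z * deriv f z - f z) := by
      have h1 := (hDz z hz).sub (hrep z hz)
      have h2 : (fun n : ℕ => ((n:ℂ)+2) * a (n+2) * z^(n+2) - a (n+2) * z^(n+2))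
          = fun n : ℕ => ((n:ℂ)+1) * a (n+2) * z^(n+2) := funext fun n => by ring
      rw [h2] at h1
      have h3 : (z * deriv f z - z) - (f z - z) = z * deriv f z - f z := by ring
      rwa [h3] at h1
    have hNabs : ∀ n : ℕ, ‖((n:ℂ)+1) * a (n+2) * z^(n+2)‖
        = ((n:ℝ)+1) * ‖a (n+2)‖ * r^(n+2) := by
      intro n
      rw [norm_mul, norm_mul, norm_pow]
      have h4 : ((n:ℂ)+1) = ((n+1 : ℕ) : ℂ) := by push_cast; ring
      rw [h4, Complex.norm_natCast]
      push_cast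
      ring
    have hsumN : Summable (fun n : ℕ => ‖((n:ℂ)+1) * a (n+2) * z^(n+2)‖) := by
      refine Summable.of_nonneg_of_le (fun n => norm_nonneg _) (fun n => ?_) hS2sum
      rw [hNabs n]
      exact mul_le_of_le_one_right (by positivity) (pow_le_one₀ hr0.le hr1.le)
    have hb2 : ‖z * deriv f z - f z‖ ≤ S2 * r^2 := by
      rw [← hNsum.tsum_eq]
      calc ‖∑' n : ℕ, ((n:ℂ)+1) * a (n+2) * z^(n+2)‖
          ≤ ∑' n : ℕ, ‖((n:ℂ)+1) * a (n+2) * z^(n+2)‖ := by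
            have := norm_tsum_le_tsum_norm (f := fun n : ℕ => ((n:ℂ)+1) * a (n+2) * z^(n+2))
              (by simpa using hsumN)
            simpa using this
        _ ≤ ∑' n : ℕ, (((n:ℝ)+1) * ‖a (n+2)‖) * r^2 := by
            refine Summable.tsum_le_tsum (fun n => ?_) hsumN (hS2sum.mul_right _)
            rw [hNabs n]
            have h5 : r^(n+2) ≤ r^2 := pow_le_pow_of_le_one hr0.le hr1.le (by omega)
            have h6 : 0 ≤ ((n:ℝ)+1) * ‖a (n+2)‖ := by positivity
            calc ((n:ℝ)+1) * ‖a (n+2)‖ * r^(n+2)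
                ≤ ((n:ℝ)+1) * ‖a (n+2)‖ * r^2 :=
                  mul_le_mul_of_nonneg_left h5 h6
              _ = _ := by ring
        _ = S2 * r^2 := by rw [tsum_mul_right]
    have hNlt : ‖z * deriv f z - f z‖ < K * ‖f z‖ := by
      have e0 : 0 < K - K * S1 := by nlinarith
      have e1 : S2 * r^2 ≤ (K - K * S1) * r^2 := by nlinarith [sq_nonneg r]
      have e2 : (K - K * S1) * r^2 < (K - K * S1) * r := by
        have h5 : r^2 < r := by nlinarith
        nlinarith
      have e3 : (K - K * S1) * r ≤ K * ‖f z‖ := by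
        have h6 : K * (r - S1 * r) ≤ K * ‖f z‖ :=
          mul_le_mul_of_nonneg_left hfz hK.le
        nlinarith
      linarith [hb2]
    refine ⟨hfzne, ?_⟩
    have hsplit : Complex.exp (Complex.I * ξ) * (z * deriv f z) / f z
        = Complex.exp (Complex.I * ξ)
          + Complex.exp (Complex.I * ξ) * (z * deriv f z - f z) / f z := by
      field_simp
      ring
    rw [hsplit, Complex.add_re]
    have hre1 : (Complex.exp (Complex.I * ξ)).re = Real.cos ξ := by
      rw [mul_comm]
      exact Complex.exp_ofReal_mul_I_re ξ
    have habse : ‖Complex.exp (Complex.I * ξ) * (z * deriv f z - f z) / f z‖ < K := by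
      rw [norm_div, norm_mul, Complex.norm_exp]
      have h9 : (Complex.I * (ξ:ℂ)).re = 0 := by simp
      rw [h9, Real.exp_zero, one_mul, div_lt_iff₀ ((norm_pos_iff.mpr hfzne))]
      exact hNlt
    have hre2 : -K < (Complex.exp (Complex.I * ξ) * (z * deriv f z - f z) / f z).re := by
      have h10 := Complex.abs_re_le_norm (Complex.exp (Complex.I * ξ) * (z * deriv f z - f z) / f z)
      have h11 := neg_abs_le ((Complex.exp (Complex.I * ξ) * (z * deriv f z - f z) / f z).re)
      linarith
    rw [hre1]
    nlinarith [hre2]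
  exact ⟨⟨hf, hf0, hd0⟩, hinj, hmain⟩
end
end

section
/- Let |ξ| < π/2 and 0 ≤ γ < 1. If f(z) = z + Σ_{n=2}^∞ a_n z^n belongs to 𝒜 and its coefficients satisfy Σ_{n=2}^∞ n [ (n-1) sec ξ + (1-γ) ] |a_n| ≤ 1 - γ, then f belongs to the class 𝒦(ξ, γ). -/
noncomputable section

open Complex Real Set

set_option maxHeartbeats 2000000 in
/-- sufficient coefficient condition for membership in `𝒦(ξ, γ)`. -/
theorem stmt3 (ξ γ : ℝ) (hξ : |ξ| < π / 2) (hγ0 : 0 ≤ γ) (hγ1 : γ < 1)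
    (f : ℂ → ℂ) (a : ℕ → ℂ)
    (hf : AnalyticOn ℂ f unitDisk)
    (hrep : ∀ z ∈ unitDisk, HasSum (fun n : ℕ => a (n + 2) * z ^ (n + 2)) (f z - z))
    (hsummable : Summable (fun n : ℕ =>
      ((n : ℝ) + 2) * (((n : ℝ) + 1) * (Real.cos ξ)⁻¹ + (1 - γ)) * ‖a (n + 2)‖))
    (hle : ∑' n : ℕ,
      ((n : ℝ) + 2) * (((n : ℝ) + 1) * (Real.cos ξ)⁻¹ + (1 - γ)) * ‖a (n + 2)‖
        ≤ 1 - γ) :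
    SpiralK0 ξ γ f := by
  have hξ' := abs_lt.mp hξ
  have hc : 0 < Real.cos ξ := Real.cos_pos_of_mem_Ioo ⟨hξ'.1, hξ'.2⟩
  have hc1 : Real.cos ξ ≤ 1 := Real.cos_le_one ξ
  set c := Real.cos ξ with hcdef
  have hcinv : 1 ≤ c⁻¹ := by
    rw [le_inv_comm₀ one_pos hc]; simpa using hc1
  -- coefficient sums
  set u : ℕ → ℝ := fun n => ((n : ℝ) + 2) * ‖a (n + 2)‖ with hu
  set v : ℕ → ℝ := fun n => ((n : ℝ) + 2) * ((n : ℝ) + 1) * ‖a (n + 2)‖ with hv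
  set w : ℕ → ℝ := fun n =>
    ((n : ℝ) + 2) * (((n : ℝ) + 1) * c⁻¹ + (1 - γ)) * ‖a (n + 2)‖ with hwdef
  have hu0 : ∀ n, 0 ≤ u n := fun n => by positivity
  have hv0 : ∀ n, 0 ≤ v n := fun n => by positivity
  have huw : ∀ n, u n ≤ w n := by
    intro n
    have h1 : (0:ℝ) ≤ ‖a (n+2)‖ := norm_nonneg _
    have h2 : (1:ℝ) ≤ ((n:ℝ)+1) * c⁻¹ + (1-γ) := by
      have h3 : ((n:ℝ)+1) * 1 ≤ ((n:ℝ)+1) * c⁻¹ :=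
        mul_le_mul_of_nonneg_left hcinv (by positivity)
      nlinarith [Nat.cast_nonneg (α := ℝ) n]
    have h3 : (0:ℝ) ≤ (n:ℝ) + 2 := by positivity
    calc u n = ((n:ℝ)+2) * 1 * ‖a (n+2)‖ := by rw [hu]; ring
    _ ≤ w n := mul_le_mul_of_nonneg_right (mul_le_mul_of_nonneg_left h2 h3) h1
  have hvw : ∀ n, v n ≤ w n := by
    intro n
    have h1 : (0:ℝ) ≤ ‖a (n+2)‖ := norm_nonneg _
    have h2 : ((n:ℝ)+2) * ((n:ℝ)+1) ≤ ((n:ℝ)+2) * (((n:ℝ)+1) * c⁻¹ + (1-γ)) := by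
      have h3 : ((n:ℝ)+1) * 1 ≤ ((n:ℝ)+1) * c⁻¹ :=
        mul_le_mul_of_nonneg_left hcinv (by positivity)
      nlinarith [Nat.cast_nonneg (α := ℝ) n]
    exact mul_le_mul_of_nonneg_right h2 h1
  have hsu : Summable u := hsummable.of_nonneg_of_le hu0 huw
  have hsv : Summable v := hsummable.of_nonneg_of_le hv0 hvw
  set A := ∑' n, u n with hA
  set B := ∑' n, v n with hB
  have hA0 : 0 ≤ A := tsum_nonneg hu0
  have hB0 : 0 ≤ B := tsum_nonneg hv0
  have hsplit : B * c⁻¹ + (1 - γ) * A ≤ 1 - γ := by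
    have hwsum : ∑' n, w n = B * c⁻¹ + (1 - γ) * A := by
      have heq : ∀ n, w n = v n * c⁻¹ + (1 - γ) * u n := by
        intro n; simp only [hwdef, hu, hv]; ring
      rw [tsum_congr heq, Summable.tsum_add (hsv.mul_right _) (hsu.mul_left _),
        tsum_mul_right, tsum_mul_left]
    calc B * c⁻¹ + (1 - γ) * A = ∑' n, w n := hwsum.symm
    _ ≤ 1 - γ := hle
  have hA1 : A ≤ 1 := by
    have h1 : 0 ≤ B * c⁻¹ := by positivity
    nlinarith
  have hBle : B ≤ c * (1 - γ) * (1 - A) := by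
    have h1 : B * c⁻¹ ≤ (1 - γ) * (1 - A) := by nlinarith
    calc B = B * c⁻¹ * c := by field_simp
    _ ≤ (1 - γ) * (1 - A) * c := mul_le_mul_of_nonneg_right h1 hc.le
    _ = c * (1 - γ) * (1 - A) := by ring
  -- series functions
  set S1 : ℂ → ℂ := fun z => ∑' n : ℕ, (((n : ℂ) + 2) * a (n + 2)) * z ^ (n + 1) with hS1def
  set S2 : ℂ → ℂ :=
    fun z => ∑' n : ℕ, ((((n : ℂ) + 2) * ((n : ℂ) + 1)) * a (n + 2)) * z ^ n with hS2def
  have hopen : IsOpen unitDisk := Metric.isOpen_ball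
  have hconn : IsPreconnected unitDisk := (convex_ball (0:ℂ) 1).isPreconnected
  have h0mem : (0:ℂ) ∈ unitDisk := by simp [unitDisk]
  have hmemnorm : ∀ z, z ∈ unitDisk ↔ ‖z‖ < 1 := by
    intro z; simp [unitDisk]
  have hterm1 : ∀ (n : ℕ) (y : ℂ),
      ‖(((n : ℂ) + 2) * a (n + 2)) * y ^ (n + 1)‖ = u n * ‖y‖ ^ (n + 1) := by
    intro n y
    have hnc : ‖((n:ℂ)+2)‖ = (n:ℝ)+2 := by
      rw [show ((n:ℂ)+2) = (((n:ℝ)+2 : ℝ):ℂ) by push_cast; ring]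
      rw [Complex.norm_real]
      exact abs_of_nonneg (by positivity)
    rw [norm_mul, norm_mul, norm_pow, hnc]
  have hterm2 : ∀ (n : ℕ) (y : ℂ),
      ‖((((n : ℂ) + 2) * ((n : ℂ) + 1)) * a (n + 2)) * y ^ n‖ = v n * ‖y‖ ^ n := by
    intro n y
    have hnc : ‖(((n:ℂ)+2) * ((n:ℂ)+1))‖ = ((n:ℝ)+2) * ((n:ℝ)+1) := by
      rw [show (((n:ℂ)+2) * ((n:ℂ)+1)) = (((((n:ℝ)+2) * ((n:ℝ)+1)) : ℝ):ℂ) by push_cast; ring]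
      rw [Complex.norm_real]
      exact abs_of_nonneg (by positivity)
    rw [norm_mul, norm_mul, norm_pow, hnc]
  -- derivative of the tail series
  have hg1 : ∀ z ∈ unitDisk,
      HasDerivAt (fun y => ∑' n : ℕ, a (n + 2) * y ^ (n + 2)) (S1 z) z := by
    intro z hz
    apply hasDerivAt_tsum_of_isPreconnected hsu hopen hconn
      (g' := fun (n : ℕ) (y : ℂ) => (((n : ℂ) + 2) * a (n + 2)) * y ^ (n + 1)) ?_ ?_ h0mem ?_ hz
    · intro n y _
      have h := (hasDerivAt_pow (n+2) y).const_mul (a (n+2))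
      refine h.congr_deriv ?_
      push_cast
      ring
    · intro n y hy
      rw [hterm1]
      have hyn : ‖y‖ ^ (n+1) ≤ 1 := pow_le_one₀ (norm_nonneg _) ((hmemnorm y).mp hy).le
      calc u n * ‖y‖ ^ (n+1) ≤ u n * 1 := mul_le_mul_of_nonneg_left hyn (hu0 n)
      _ = u n := mul_one _
    · apply summable_of_ne_finset_zero (s := ∅)
      intro n _
      simp
  -- derivative of S1
  have hg2 : ∀ z ∈ unitDisk, HasDerivAt S1 (S2 z) z := by
    intro z hz
    rw [hS1def]
    apply hasDerivAt_tsum_of_isPreconnected hsv hopen hconn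
      (g' := fun (n : ℕ) (y : ℂ) => ((((n : ℂ) + 2) * ((n : ℂ) + 1)) * a (n + 2)) * y ^ n) ?_ ?_ h0mem ?_ hz
    · intro n y _
      have h := (hasDerivAt_pow (n+1) y).const_mul (((n : ℂ) + 2) * a (n + 2))
      refine h.congr_deriv ?_
      push_cast
      ring
    · intro n y hy
      rw [hterm2]
      have hyn : ‖y‖ ^ n ≤ 1 := pow_le_one₀ (norm_nonneg _) ((hmemnorm y).mp hy).le
      calc v n * ‖y‖ ^ n ≤ v n * 1 := mul_le_mul_of_nonneg_left hyn (hv0 n)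
      _ = v n := mul_one _
    · apply summable_of_ne_finset_zero (s := ∅)
      intro n _
      simp
  -- derivative of f
  have hfeq : ∀ z ∈ unitDisk, f z = z + ∑' n : ℕ, a (n + 2) * z ^ (n + 2) := by
    intro z hz
    have := (hrep z hz).tsum_eq
    rw [this]; ring
  have hDf : ∀ z ∈ unitDisk, HasDerivAt f (1 + S1 z) z := by
    intro z hz
    have h1 : HasDerivAt (fun y => y + ∑' n : ℕ, a (n + 2) * y ^ (n + 2)) (1 + S1 z) z :=
      (hasDerivAt_id z).add (hg1 z hz)
    apply h1.congr_of_eventuallyEq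
    filter_upwards [hopen.mem_nhds hz] with y hy
    exact hfeq y hy
  have hderiv1 : ∀ z ∈ unitDisk, deriv f z = 1 + S1 z := fun z hz => (hDf z hz).deriv
  have hDDf : ∀ z ∈ unitDisk, HasDerivAt (deriv f) (S2 z) z := by
    intro z hz
    have h1 : HasDerivAt (fun y => 1 + S1 y) (S2 z) z := by
      exact (hg2 z hz).const_add 1
    apply h1.congr_of_eventuallyEq
    filter_upwards [hopen.mem_nhds hz] with y hy
    exact hderiv1 y hy
  have hderiv2 : ∀ z ∈ unitDisk, deriv (deriv f) z = S2 z := fun z hz => (hDDf z hz).deriv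
  -- estimates
  have hS1bound : ∀ z ∈ unitDisk, ‖S1 z‖ ≤ ‖z‖ * A := by
    intro z hz
    apply tsum_of_norm_bounded (hsu.hasSum.mul_left ‖z‖)
    intro n
    rw [hterm1]
    have h1 : ‖z‖ ^ (n+1) ≤ ‖z‖ := by
      calc ‖z‖ ^ (n+1) = ‖z‖ ^ n * ‖z‖ := by ring
      _ ≤ 1 * ‖z‖ :=
        mul_le_mul_of_nonneg_right (pow_le_one₀ (norm_nonneg _) ((hmemnorm z).mp hz).le)
          (norm_nonneg _)
      _ = ‖z‖ := one_mul _
    calc u n * ‖z‖ ^ (n+1) ≤ u n * ‖z‖ := mul_le_mul_of_nonneg_left h1 (hu0 n)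
    _ = ‖z‖ * u n := mul_comm _ _
  have hS2bound : ∀ z ∈ unitDisk, ‖S2 z‖ ≤ B := by
    intro z hz
    apply tsum_of_norm_bounded hsv.hasSum
    intro n
    rw [hterm2]
    calc v n * ‖z‖ ^ n ≤ v n * 1 :=
      mul_le_mul_of_nonneg_left (pow_le_one₀ (norm_nonneg _) ((hmemnorm z).mp hz).le) (hv0 n)
    _ = v n := mul_one _
  have hflow : ∀ z ∈ unitDisk, 1 - ‖z‖ * A ≤ ‖deriv f z‖ := by
    intro z hz
    rw [hderiv1 z hz]
    have h1 : (1:ℝ) ≤ ‖1 + S1 z‖ + ‖S1 z‖ := by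
      have e : (1:ℂ) = (1 + S1 z) - S1 z := by ring
      calc (1:ℝ) = ‖(1:ℂ)‖ := by simp
      _ = ‖(1 + S1 z) - S1 z‖ := by rw [← e]
      _ ≤ ‖1 + S1 z‖ + ‖S1 z‖ := norm_sub_le _ _
    have h2 := hS1bound z hz
    linarith
  have hpos : ∀ z ∈ unitDisk, 0 < 1 - ‖z‖ * A := by
    intro z hz
    have h1 : ‖z‖ * A ≤ ‖z‖ * 1 := mul_le_mul_of_nonneg_left hA1 (norm_nonneg _)
    have h2 := (hmemnorm z).mp hz
    nlinarith
  -- normalized analytic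
  have hf0 : f 0 = 0 := by
    have h := hrep 0 h0mem
    have h2 : HasSum (fun n : ℕ => a (n + 2) * (0:ℂ) ^ (n + 2)) 0 := by
      convert hasSum_zero with n
      simp
    have := h.unique h2
    simpa using this
  have hS10 : S1 0 = 0 := by
    rw [hS1def]
    convert tsum_zero with n
    simp
  have hdf0 : deriv f 0 = 1 := by
    rw [hderiv1 0 h0mem, hS10, add_zero]
  -- injectivity
  have hinj : Set.InjOn f unitDisk := by
    intro z hz y hy hfzy
    set r := max ‖z‖ ‖y‖ with hr
    have hr1 : r < 1 := max_lt ((hmemnorm z).mp hz) ((hmemnorm y).mp hy)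
    have hr0 : 0 ≤ r := le_max_of_le_left (norm_nonneg _)
    have hsub : Metric.closedBall (0:ℂ) r ⊆ unitDisk := by
      intro x hx
      rw [hmemnorm]
      have : ‖x‖ ≤ r := by simpa using hx
      linarith
    have hzr : z ∈ Metric.closedBall (0:ℂ) r := by
      simp only [Metric.mem_closedBall, dist_zero_right]
      exact le_max_left _ _
    have hyr : y ∈ Metric.closedBall (0:ℂ) r := by
      simp only [Metric.mem_closedBall, dist_zero_right]
      exact le_max_right _ _
    have hmean : ‖(fun t => f t - t) z - (fun t => f t - t) y‖ ≤ r * ‖z - y‖ := by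
      apply Convex.norm_image_sub_le_of_norm_hasDerivWithin_le
        (f := fun t => f t - t) (f' := fun x => S1 x) ?_ ?_ (convex_closedBall _ _) hyr hzr
      · intro x hx
        have hx' : x ∈ unitDisk := hsub hx
        have h1 : HasDerivAt (fun t => f t - t) (S1 x) x := by
          have h2 := (hDf x hx').sub (hasDerivAt_id' x)
          refine h2.congr_deriv ?_
          ring
        exact h1.hasDerivWithinAt
      · intro x hx
        have hx' : x ∈ unitDisk := hsub hx
        have hxr : ‖x‖ ≤ r := by simpa using hx
        calc ‖S1 x‖ ≤ ‖x‖ * A := hS1bound x hx'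
        _ ≤ r * 1 := mul_le_mul hxr hA1 hA0 hr0
        _ = r := mul_one _
    simp only at hmean
    rw [hfzy] at hmean
    have h1 : ‖z - y‖ ≤ r * ‖z - y‖ := by
      have : (f y - z) - (f y - y) = -(z - y) := by ring
      rw [this, norm_neg] at hmean
      exact hmean
    have h2 : ‖z - y‖ = 0 := by nlinarith [norm_nonneg (z - y)]
    exact sub_eq_zero.mp (norm_eq_zero.mp h2)
  refine ⟨⟨hf, hf0, hdf0⟩, hinj, ?_⟩
  intro z hz
  have hzn := (hmemnorm z).mp hz
  have hne : deriv f z ≠ 0 := by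
    intro h
    have := hflow z hz
    rw [h, norm_zero] at this
    have := hpos z hz
    linarith
  refine ⟨hne, ?_⟩
  -- the main estimate
  set t : ℂ := z * deriv (deriv f) z / deriv f z with ht
  have htb : ‖t‖ < (1 - γ) * c := by
    have h1 : ‖z * deriv (deriv f) z‖ ≤ ‖z‖ * B := by
      rw [norm_mul, hderiv2 z hz]
      exact mul_le_mul_of_nonneg_left (hS2bound z hz) (norm_nonneg _)
    have h2 : ‖z‖ * B < (1 - γ) * c * (1 - ‖z‖ * A) := by
      have e1 : ‖z‖ * B ≤ ‖z‖ * (c * (1 - γ) * (1 - A)) :=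
        mul_le_mul_of_nonneg_left hBle (norm_nonneg z)
      have e2 : (0:ℝ) < (1 - γ) * c * (1 - ‖z‖) :=
        mul_pos (mul_pos (by linarith) hc) (by linarith)
      nlinarith
    have h3 : 0 < ‖deriv f z‖ := lt_of_lt_of_le (hpos z hz) (hflow z hz)
    rw [ht, norm_div]
    rw [div_lt_iff₀ h3]
    calc ‖z * deriv (deriv f) z‖ ≤ ‖z‖ * B := h1
    _ < (1 - γ) * c * (1 - ‖z‖ * A) := h2
    _ ≤ (1 - γ) * c * ‖deriv f z‖ :=
        mul_le_mul_of_nonneg_left (hflow z hz) (mul_nonneg (by linarith) hc.le)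
  have hre : (Complex.exp (Complex.I * ξ) * (1 + t)).re = c + (Complex.exp (Complex.I * ξ) * t).re := by
    rw [mul_add, mul_one, Complex.add_re]
    congr 1
    rw [mul_comm Complex.I (ξ:ℂ)]
    exact Complex.exp_ofReal_mul_I_re ξ
  have habs : ‖Complex.exp (Complex.I * ξ) * t‖ = ‖t‖ := by
    rw [norm_mul, mul_comm Complex.I (ξ:ℂ), Complex.norm_exp_ofReal_mul_I, one_mul]
  have hlow : -(‖t‖) ≤ (Complex.exp (Complex.I * ξ) * t).re := by
    have := Complex.abs_re_le_norm (Complex.exp (Complex.I * ξ) * t)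
    rw [habs] at this
    linarith [abs_le.mp this]
  rw [hre]
  have : ‖t‖ < (1 - γ) * c := by exact htb
  nlinarith
end
end

section
/- Let τ ∈ ℂ \ {0}, 0 < ϑ ≤ 1 and δ < 1. If f(z) = z + Σ_{n=2}^∞ a_n z^n belongs to the class ℛ^τ(ϑ, δ), then for every integer n ≥ 2 one has |a_n| ≤ 2|τ|(1-δ) / (1 + ϑ(n-1)). -/
noncomputable section

open Complex Real Set

private lemma helper_geom (d : ℕ) {x : ℝ} (h0 : 0 ≤ x) (h1 : x < 1) :
    Summable (fun k : ℕ => ((k : ℝ) + 2) ^ d * x ^ k) := by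
  rcases h0.eq_or_lt with h | h
  · apply summable_of_ne_finset_zero (s := {0})
    intro k hk
    simp only [Finset.mem_singleton] at hk
    rw [← h, zero_pow hk, mul_zero]
  · have hx : ‖x‖ < 1 := by rwa [Real.norm_eq_abs, abs_of_pos h]
    have h2 : Summable (fun k : ℕ => ((k : ℝ) + 2) ^ d * x ^ (k + 2)) := by
      have h3 := (summable_nat_add_iff (f := fun n : ℕ => (n : ℝ) ^ d * x ^ n) 2).2
        (summable_pow_mul_geometric_of_norm_lt_one d hx)
      refine h3.congr fun k => ?_
      push_cast
      ring
    have h3 := h2.mul_left ((x ^ 2)⁻¹)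
    refine h3.congr fun k => ?_
    have hx2 : x ^ 2 ≠ 0 := pow_ne_zero _ h.ne'
    field_simp
    ring

private lemma circle_exp_integral (j : ℤ) :
    ∫ θ in Set.Ioc (0 : ℝ) (2 * π), Complex.exp ((j : ℂ) * Complex.I * θ) =
      if j = 0 then ((2 * π : ℝ) : ℂ) else 0 := by
  have h2π : (0 : ℝ) ≤ 2 * π := by positivity
  rw [← intervalIntegral.integral_of_le h2π]
  split_ifs with hj
  · subst hj
    simp
  · have hc : (j : ℂ) * Complex.I ≠ 0 :=
      mul_ne_zero (by exact_mod_cast hj) Complex.I_ne_zero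
    rw [integral_exp_mul_complex hc]
    have h1 : (j : ℂ) * Complex.I * (((2 * π : ℝ)) : ℂ) = (j : ℂ) * (2 * (π : ℝ) * Complex.I) := by
      push_cast
      ring
    rw [h1, Complex.exp_int_mul_two_pi_mul_I]
    simp

private lemma circle_swap (c : ℕ → ℂ) (e : ℕ → ℤ)
    (hc : Summable fun k => ‖c k‖) :
    ∫ θ in Set.Ioc (0 : ℝ) (2 * π),
        ∑' k : ℕ, c k * Complex.exp ((e k : ℂ) * Complex.I * θ) =
      ∑' k : ℕ, c k * (if e k = 0 then ((2 * π : ℝ) : ℂ) else 0) := by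
  have hnn : ∀ (k : ℕ) (θ : ℝ), ‖c k * Complex.exp ((e k : ℂ) * Complex.I * θ)‖₊ = ‖c k‖₊ := by
    intro k θ
    have h1 : ‖Complex.exp ((e k : ℂ) * Complex.I * θ)‖ = 1 := by
      rw [Complex.norm_exp]
      simp
    have h2 : ‖Complex.exp ((e k : ℂ) * Complex.I * θ)‖₊ = 1 := by
      ext
      simpa using h1
    rw [nnnorm_mul, h2, mul_one]
  rw [MeasureTheory.integral_tsum]
  · refine tsum_congr fun k => ?_
    rw [MeasureTheory.integral_const_mul, circle_exp_integral]
  · intro k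
    have hcont : Continuous fun θ : ℝ => c k * Complex.exp ((e k : ℂ) * Complex.I * θ) := by
      fun_prop
    exact hcont.aestronglyMeasurable.restrict
  · have hvol : ∀ k : ℕ, ∫⁻ θ in Set.Ioc (0 : ℝ) (2 * π),
        ‖c k * Complex.exp ((e k : ℂ) * Complex.I * θ)‖₊ = ‖c k‖₊ * ENNReal.ofReal (2 * π) := by
      intro k
      have : (fun θ : ℝ => (‖c k * Complex.exp ((e k : ℂ) * Complex.I * θ)‖₊ : ENNReal)) =
          fun _ : ℝ => (‖c k‖₊ : ENNReal) := by
        funext θ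
        rw [hnn]
      rw [this, MeasureTheory.setLIntegral_const, Real.volume_Ioc]
      norm_num
    simp only [enorm_eq_nnnorm, hvol]
    rw [ENNReal.tsum_mul_right]
    apply ENNReal.mul_ne_top
    · rw [ENNReal.tsum_coe_ne_top_iff_summable]
      rw [← NNReal.summable_coe]
      refine hc.congr fun k => ?_
      simp
    · exact ENNReal.ofReal_ne_top

/-- coefficient bounds for functions in `ℛ^τ(ϑ, δ)`. -/
theorem stmt4 (τ : ℂ) (hτ : τ ≠ 0) (ϑ δ : ℝ) (hϑ0 : 0 < ϑ) (hϑ1 : ϑ ≤ 1) (hδ : δ < 1)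
    (f : ℂ → ℂ) (a : ℕ → ℂ)
    (hrep : ∀ z ∈ unitDisk, HasSum (fun n : ℕ => a (n + 2) * z ^ (n + 2)) (f z - z))
    (hf : ClassR τ ϑ δ f) :
    ∀ n : ℕ, 2 ≤ n →
      ‖a n‖ ≤ 2 * ‖τ‖ * (1 - δ) / (1 + ϑ * ((n : ℝ) - 1)) := by
  obtain ⟨⟨hfa, hf0, hf1⟩, hinj, hcond⟩ := hf
  have hmem_iff : ∀ z : ℂ, z ∈ unitDisk ↔ ‖z‖ < 1 := by
    intro z
    simp [unitDisk, Metric.mem_ball, Complex.dist_eq]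
  have hopen : IsOpen unitDisk := Metric.isOpen_ball
  set c : ℂ := 2 * τ * (1 - (δ : ℂ)) with hc_def
  have hδ' : (0 : ℝ) < 1 - δ := by linarith
  have hc0 : c ≠ 0 := by
    refine mul_ne_zero (mul_ne_zero two_ne_zero hτ) ?_
    intro h
    rw [sub_eq_zero] at h
    have : (1 : ℝ) = δ := by exact_mod_cast h
    linarith
  have habsc : ‖c‖ = 2 * ‖τ‖ * (1 - δ) := by
    have h1 : c = 2 * τ * (((1 - δ : ℝ)) : ℂ) := by
      rw [hc_def]
      push_cast
      ring
    rw [h1, norm_mul, norm_mul, Complex.norm_two, Complex.norm_real, Real.norm_eq_abs, abs_of_pos hδ']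
  have habsc_pos : 0 < ‖c‖ := by
    rw [habsc]
    have := norm_pos_iff.mpr hτ
    positivity
  -- growth estimates
  have growth : ∀ (d : ℕ) (s : ℝ), 0 ≤ s → s < 1 →
      Summable (fun k : ℕ => ((k : ℝ) + 2) ^ d * (‖a (k + 2)‖ * s ^ k)) := by
    intro d s hs0 hs1
    obtain ⟨ρ, hsρ, hρ1⟩ : ∃ ρ : ℝ, s < ρ ∧ ρ < 1 := ⟨(s + 1) / 2, by linarith, by linarith⟩
    have hρ0 : 0 < ρ := hs0.trans_lt hsρ
    have hmem : ((ρ : ℝ) : ℂ) ∈ unitDisk := by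
      rw [hmem_iff, Complex.norm_real, Real.norm_eq_abs, abs_of_pos hρ0]
      exact hρ1
    have hsum := (hrep _ hmem).summable
    have htend : Filter.Tendsto (fun k : ℕ => ‖a (k + 2) * ((ρ : ℝ) : ℂ) ^ (k + 2)‖)
        Filter.atTop (nhds 0) := by
      rw [show (0 : ℝ) = ‖(0 : ℂ)‖ by simp]
      exact hsum.tendsto_atTop_zero.norm
    obtain ⟨M, hM⟩ := htend.bddAbove_range
    have hM' : ∀ k : ℕ, ‖a (k + 2)‖ * ρ ^ (k + 2) ≤ M := by
      intro k
      have h1 : ‖a (k + 2) * ((ρ : ℝ) : ℂ) ^ (k + 2)‖ ≤ M :=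
        hM ⟨k, rfl⟩
      rwa [norm_mul, norm_pow,
        Complex.norm_real, Real.norm_eq_abs, abs_of_pos hρ0] at h1
    have hx0 : 0 ≤ s / ρ := div_nonneg hs0 hρ0.le
    have hx1 : s / ρ < 1 := by
      rw [div_lt_one hρ0]
      exact hsρ
    refine Summable.of_nonneg_of_le (fun k => by positivity) ?_
      ((helper_geom d hx0 hx1).mul_left (M / ρ ^ 2))
    intro k
    have ha : ‖a (k + 2)‖ ≤ M / ρ ^ (k + 2) := by
      rw [le_div_iff₀ (by positivity)]
      exact hM' k
    calc ((k : ℝ) + 2) ^ d * (‖a (k + 2)‖ * s ^ k)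
        ≤ ((k : ℝ) + 2) ^ d * (M / ρ ^ (k + 2) * s ^ k) := by
          gcongr
      _ = M / ρ ^ 2 * (((k : ℝ) + 2) ^ d * (s / ρ) ^ k) := by
          rw [div_pow]
          have hρk : (ρ : ℝ) ^ (k + 2) ≠ 0 := by positivity
          field_simp
          ring
  -- the modified coefficients and the auxiliary function H
  set b : ℕ → ℂ := fun k => ((1 + ϑ * ((k : ℝ) + 1) : ℝ) : ℂ) * a (k + 2) with hb_def
  set H : ℂ → ℂ := fun z => ∑' k : ℕ, b k * z ^ (k + 1) with hH_def
  have hb_abs : ∀ k : ℕ, ‖b k‖ ≤ ((k : ℝ) + 2) * ‖a (k + 2)‖ := by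
    intro k
    rw [hb_def]
    simp only [norm_mul, Complex.norm_real, Real.norm_eq_abs]
    have h1 : |1 + ϑ * ((k : ℝ) + 1)| = 1 + ϑ * ((k : ℝ) + 1) := by
      apply abs_of_pos
      have : (0 : ℝ) ≤ (k : ℝ) + 1 := by positivity
      nlinarith
    rw [h1]
    have h2 : 1 + ϑ * ((k : ℝ) + 1) ≤ (k : ℝ) + 2 := by nlinarith
    exact mul_le_mul_of_nonneg_right h2 (norm_nonneg _)
  have hbsum_norm : ∀ s : ℝ, 0 ≤ s → s < 1 →
      Summable (fun k : ℕ => ‖b k‖ * s ^ (k + 1)) := by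
    intro s hs0 hs1
    refine Summable.of_nonneg_of_le (fun k => by positivity) ?_ ((growth 1 s hs0 hs1).mul_left s)
    intro k
    calc ‖b k‖ * s ^ (k + 1)
        ≤ (((k : ℝ) + 2) * ‖a (k + 2)‖) * s ^ (k + 1) := by
          gcongr
          exact hb_abs k
      _ = s * (((k : ℝ) + 2) ^ 1 * (‖a (k + 2)‖ * s ^ k)) := by ring
  have hsum_b : ∀ z : ℂ, z ∈ unitDisk → Summable (fun k : ℕ => b k * z ^ (k + 1)) := by
    intro z hz
    rw [hmem_iff] at hz
    apply Summable.of_norm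
    refine (hbsum_norm (‖z‖) (norm_nonneg z) hz).congr fun k => ?_
    rw [norm_mul (b k), norm_pow]
  have hHsum : ∀ z ∈ unitDisk, HasSum (fun k : ℕ => b k * z ^ (k + 1)) (H z) :=
    fun z hz => (hsum_b z hz).hasSum
  have hH0 : H 0 = 0 := by
    have h : (fun k : ℕ => b k * (0 : ℂ) ^ (k + 1)) = fun _ => 0 := by
      funext k
      rw [zero_pow (Nat.succ_ne_zero k), mul_zero]
    show (∑' k : ℕ, b k * (0 : ℂ) ^ (k + 1)) = 0
    rw [h, tsum_zero]
  -- derivative of f via term-by-term differentiation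
  have hderiv : ∀ z ∈ unitDisk,
      deriv f z = 1 + ∑' k : ℕ, ((k : ℂ) + 2) * a (k + 2) * z ^ (k + 1) := by
    intro z hz
    rw [hmem_iff] at hz
    obtain ⟨ρ, hzρ, hρ1⟩ : ∃ ρ : ℝ, ‖z‖ < ρ ∧ ρ < 1 :=
      ⟨(‖z‖ + 1) / 2, by linarith, by linarith⟩
    have hρ0 : 0 < ρ := (norm_nonneg z).trans_lt hzρ
    have hball : Metric.ball (0 : ℂ) ρ ⊆ unitDisk := by
      apply Metric.ball_subset_ball
      linarith
    have hzball : z ∈ Metric.ball (0 : ℂ) ρ := by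
      rw [Metric.mem_ball, Complex.dist_eq, sub_zero]
      exact hzρ
    have hT : HasDerivAt (fun w : ℂ => ∑' k : ℕ, a (k + 2) * w ^ (k + 2))
        (∑' k : ℕ, ((k : ℂ) + 2) * a (k + 2) * z ^ (k + 1)) z := by
      apply hasDerivAt_tsum_of_isPreconnected
        (u := fun k : ℕ => ρ * (((k : ℝ) + 2) ^ 1 * (‖a (k + 2)‖ * ρ ^ k)))
        ((growth 1 ρ hρ0.le hρ1).mul_left ρ) Metric.isOpen_ball
        (convex_ball (0 : ℂ) ρ).isPreconnected ?_ ?_ (Metric.mem_ball_self hρ0) ?_ hzball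
      · intro k y _
        have h1 := (hasDerivAt_pow (k + 2) y).const_mul (a (k + 2))
        refine h1.congr_deriv ?_
        push_cast
        ring
      · intro k y hy
        rw [Metric.mem_ball, Complex.dist_eq, sub_zero] at hy
        rw [norm_mul, norm_mul, norm_pow]
        have h1 : ‖(k : ℂ) + 2‖ = (k : ℝ) + 2 := by
          rw [show ((k : ℂ) + 2) = (((k : ℝ) + 2 : ℝ) : ℂ) by push_cast; ring,
            Complex.norm_real, Real.norm_eq_abs]
          exact abs_of_nonneg (by positivity)
        rw [h1]
        calc ((k : ℝ) + 2) * ‖a (k + 2)‖ * ‖y‖ ^ (k + 1)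
            ≤ ((k : ℝ) + 2) * ‖a (k + 2)‖ * ρ ^ (k + 1) := by
              gcongr <;> first | exact hy.le | exact norm_nonneg y
          _ = ρ * (((k : ℝ) + 2) ^ 1 * (‖a (k + 2)‖ * ρ ^ k)) := by ring
      · refine Summable.congr (f := fun _ : ℕ => (0 : ℂ)) summable_zero fun k => ?_
        rw [zero_pow (Nat.succ_ne_zero (k + 1)), mul_zero]
    have hFF : HasDerivAt (fun w : ℂ => w + ∑' k : ℕ, a (k + 2) * w ^ (k + 2))
        (1 + ∑' k : ℕ, ((k : ℂ) + 2) * a (k + 2) * z ^ (k + 1)) z :=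
      (hasDerivAt_id z).add hT
    have hEq : Set.EqOn f (fun w : ℂ => w + ∑' k : ℕ, a (k + 2) * w ^ (k + 2)) unitDisk := by
      intro w hw
      have h1 := (hrep w hw).tsum_eq
      simp only
      rw [h1]
      ring
    have hz' : z ∈ unitDisk := by rwa [hmem_iff]
    rw [Filter.EventuallyEq.deriv_eq (hEq.eventuallyEq_of_mem (hopen.mem_nhds hz'))]
    exact hFF.deriv
  -- the class expression equals H
  have hHeq : ∀ z ∈ unitDisk,
      (1 - (ϑ : ℂ)) * (if z = 0 then 1 else f z / z) + (ϑ : ℂ) * deriv f z - 1 = H z := by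
    intro z hz
    by_cases hz0 : z = 0
    · subst hz0
      rw [if_pos rfl, hf1, hH0]
      ring
    · rw [if_neg hz0, hderiv z hz]
      rw [hmem_iff] at hz
      have hA : HasSum (fun k : ℕ => a (k + 2) * z ^ (k + 1))
          (∑' k : ℕ, a (k + 2) * z ^ (k + 1)) := by
        apply Summable.hasSum
        apply Summable.of_norm
        have hg := (growth 0 (‖z‖) (norm_nonneg z) hz).mul_left (‖z‖)
        refine Summable.of_nonneg_of_le (fun k => norm_nonneg _) (fun k => ?_) hg
        rw [norm_mul, norm_pow]
        apply le_of_eq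
        ring
      have hS : HasSum (fun k : ℕ => ((k : ℂ) + 2) * a (k + 2) * z ^ (k + 1))
          (∑' k : ℕ, ((k : ℂ) + 2) * a (k + 2) * z ^ (k + 1)) := by
        apply Summable.hasSum
        apply Summable.of_norm
        have hg := (growth 1 (‖z‖) (norm_nonneg z) hz).mul_left (‖z‖)
        refine Summable.of_nonneg_of_le (fun k => norm_nonneg _) (fun k => ?_) hg
        rw [norm_mul, norm_mul, norm_pow]
        rw [show ((k : ℂ) + 2) = (((k : ℝ) + 2 : ℝ) : ℂ) by push_cast; ring,
          Complex.norm_real, Real.norm_eq_abs, _root_.abs_of_nonneg (by positivity : (0:ℝ) ≤ (k : ℝ) + 2)]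
        apply le_of_eq
        ring
      have hfz : f z = z + (∑' k : ℕ, a (k + 2) * z ^ (k + 1)) * z := by
        have h1 := (hrep z (by rwa [hmem_iff])).tsum_eq
        have h2 : (∑' k : ℕ, a (k + 2) * z ^ (k + 1)) * z
            = ∑' k : ℕ, a (k + 2) * z ^ (k + 2) := by
          rw [← (hA.mul_right z).tsum_eq]
          refine tsum_congr fun k => ?_
          ring
        rw [h2, h1]
        ring
      have hfzdiv : f z / z = 1 + ∑' k : ℕ, a (k + 2) * z ^ (k + 1) := by
        rw [hfz]
        field_simp
      have hcomb : HasSum (fun k : ℕ => b k * z ^ (k + 1))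
          ((1 - (ϑ : ℂ)) * (∑' k : ℕ, a (k + 2) * z ^ (k + 1))
            + (ϑ : ℂ) * (∑' k : ℕ, ((k : ℂ) + 2) * a (k + 2) * z ^ (k + 1))) := by
        have h3 := (hA.mul_left (1 - (ϑ : ℂ))).add (hS.mul_left (ϑ : ℂ))
        refine HasSum.congr_fun h3 fun k => ?_
        rw [hb_def]
        push_cast
        ring
      have hHz : H z = (1 - (ϑ : ℂ)) * (∑' k : ℕ, a (k + 2) * z ^ (k + 1))
          + (ϑ : ℂ) * (∑' k : ℕ, ((k : ℂ) + 2) * a (k + 2) * z ^ (k + 1)) := by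
        rw [hH_def]
        exact hcomb.tsum_eq
      rw [hfzdiv, hHz]
      ring
  -- the inequality from the class condition
  have hW : ∀ z ∈ unitDisk, ‖H z / (c + H z)‖ < 1 := by
    intro z hz
    have h1 := hcond z hz
    have h2 := hHeq z hz
    have h3 : ((1 - (ϑ : ℂ)) * (if z = 0 then 1 else f z / z) + (ϑ : ℂ) * deriv f z - 1) /
          (2 * τ * (1 - (δ : ℂ)) +
            (1 - (ϑ : ℂ)) * (if z = 0 then 1 else f z / z) + (ϑ : ℂ) * deriv f z - 1)
        = H z / (c + H z) := by
      rw [← h2, hc_def]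
      ring_nf
    rwa [h3] at h1
  -- differentiability of H
  have hHderiv : ∀ z ∈ unitDisk, DifferentiableAt ℂ H z := by
    intro z hz
    rw [hmem_iff] at hz
    obtain ⟨ρ, hzρ, hρ1⟩ : ∃ ρ : ℝ, ‖z‖ < ρ ∧ ρ < 1 :=
      ⟨(‖z‖ + 1) / 2, by linarith, by linarith⟩
    have hρ0 : 0 < ρ := (norm_nonneg z).trans_lt hzρ
    have hzball : z ∈ Metric.ball (0 : ℂ) ρ := by
      rw [Metric.mem_ball, Complex.dist_eq, sub_zero]
      exact hzρ
    have hT : HasDerivAt (fun w : ℂ => ∑' k : ℕ, b k * w ^ (k + 1))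
        (∑' k : ℕ, ((k : ℂ) + 1) * b k * z ^ k) z := by
      apply hasDerivAt_tsum_of_isPreconnected
        (u := fun k : ℕ => ((k : ℝ) + 2) ^ 2 * (‖a (k + 2)‖ * ρ ^ k))
        (growth 2 ρ hρ0.le hρ1) Metric.isOpen_ball
        (convex_ball (0 : ℂ) ρ).isPreconnected ?_ ?_ (Metric.mem_ball_self hρ0) ?_ hzball
      · intro k y _
        have h1 := (hasDerivAt_pow (k + 1) y).const_mul (b k)
        refine h1.congr_deriv ?_
        push_cast
        ring
      · intro k y hy
        rw [Metric.mem_ball, Complex.dist_eq, sub_zero] at hy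
        rw [norm_mul, norm_mul, norm_pow]
        have h1 : ‖(k : ℂ) + 1‖ = (k : ℝ) + 1 := by
          rw [show ((k : ℂ) + 1) = (((k : ℝ) + 1 : ℝ) : ℂ) by push_cast; ring,
            Complex.norm_real, Real.norm_eq_abs]
          exact _root_.abs_of_nonneg (by positivity)
        rw [h1]
        calc ((k : ℝ) + 1) * ‖b k‖ * ‖y‖ ^ k
            ≤ ((k : ℝ) + 1) * (((k : ℝ) + 2) * ‖a (k + 2)‖) * ρ ^ k := by
              gcongr <;> first | exact hy.le | exact hb_abs k | exact norm_nonneg y | positivity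
          _ ≤ ((k : ℝ) + 2) * (((k : ℝ) + 2) * ‖a (k + 2)‖) * ρ ^ k := by
              gcongr <;> first | linarith | positivity
          _ = ((k : ℝ) + 2) ^ 2 * (‖a (k + 2)‖ * ρ ^ k) := by ring
      · refine Summable.congr (f := fun _ : ℕ => (0 : ℂ)) summable_zero fun k => ?_
        rw [zero_pow (Nat.succ_ne_zero k), mul_zero]
    exact hT.differentiableAt
  have hHcont : ∀ z ∈ unitDisk, ContinuousAt H z := fun z hz => (hHderiv z hz).continuousAt
  -- c + H never vanishes on the disk
  have hne : ∀ z ∈ unitDisk, c + H z ≠ 0 := by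
    intro z₀ hz₀ h0
    have hA : AnalyticOnNhd ℂ (fun z => c + H z) unitDisk := by
      have hdiff : DifferentiableOn ℂ (fun z => c + H z) unitDisk := fun z hz =>
        (differentiableAt_const c |>.add (hHderiv z hz)).differentiableWithinAt
      exact hdiff.analyticOnNhd hopen
    rcases (hA z₀ hz₀).eventually_eq_zero_or_eventually_ne_zero with hcase | hcase
    · have hzero : Set.EqOn (fun z => c + H z) 0 unitDisk := by
        apply hA.eqOn_zero_of_preconnected_of_eventuallyEq_zero
          (convex_ball (0 : ℂ) 1).isPreconnected hz₀
        exact hcase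
      have h00 : (0 : ℂ) ∈ unitDisk := by
        rw [hmem_iff]
        simp
      have := hzero h00
      simp only [Pi.zero_apply, hH0, add_zero] at this
      exact hc0 this
    · have hmemn : unitDisk ∈ nhds z₀ := hopen.mem_nhds hz₀
      have hev : ∀ᶠ z in nhdsWithin z₀ {z₀}ᶜ,
          ‖H z‖ < ‖c + H z‖ := by
        filter_upwards [hcase, eventually_nhdsWithin_of_eventually_nhds
          ((Filter.eventually_iff_exists_mem).mpr ⟨unitDisk, hmemn, fun z hz => hz⟩)]
          with z hz1 hz2
        have h1 := hW z hz2
        rwa [norm_div, div_lt_one (norm_pos_iff.mpr hz1)] at h1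
      have hca : ContinuousAt (fun z => ‖c + H z‖ - ‖H z‖) z₀ := by
        have h1 : ContinuousAt H z₀ := hHcont z₀ hz₀
        exact (continuous_norm.continuousAt.comp (continuousAt_const.add h1)).sub
          (continuous_norm.continuousAt.comp h1)
      have ht : Filter.Tendsto (fun z => ‖c + H z‖ - ‖H z‖)
          (nhdsWithin z₀ {z₀}ᶜ) (nhds (‖c + H z₀‖ - ‖H z₀‖)) :=
        hca.tendsto.mono_left nhdsWithin_le_nhds
      have hge : 0 ≤ ‖c + H z₀‖ - ‖H z₀‖ :=
        ge_of_tendsto ht (hev.mono fun z hz => by linarith)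
      rw [h0] at hge
      simp only [norm_zero] at hge
      have hH0' : ‖H z₀‖ = 0 := le_antisymm (by linarith) (norm_nonneg _)
      rw [norm_eq_zero] at hH0'
      rw [hH0', add_zero] at h0
      exact hc0 h0
  -- strict positivity of the Carathéodory kernel numerator
  have hQpos : ∀ z ∈ unitDisk,
      0 < ‖c‖ ^ 2 + 2 * ((starRingEnd ℂ) c * H z).re := by
    intro z hz
    have h1 := hW z hz
    rw [norm_div, div_lt_one (norm_pos_iff.mpr (hne z hz))] at h1
    have h2 : ‖H z‖ ^ 2 < ‖c + H z‖ ^ 2 := by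
      apply pow_lt_pow_left₀ h1 (norm_nonneg _)
      norm_num
    rw [Complex.sq_norm, Complex.sq_norm, Complex.normSq_add] at h2
    have h3 : (c * (starRingEnd ℂ) (H z)).re = ((starRingEnd ℂ) c * H z).re := by
      simp only [Complex.mul_re, Complex.conj_re, Complex.conj_im]
      ring
    rw [h3] at h2
    have h4 : 0 ≤ Complex.normSq (H z) := Complex.normSq_nonneg _
    rw [Complex.sq_norm]
    linarith
  -- main estimate
  intro n hn
  set N : ℕ := n - 1 with hN_def
  have hN1 : 1 ≤ N := by omega
  have key : ∀ r : ℝ, 0 < r → r < 1 →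
      ‖b (N - 1)‖ * r ^ N ≤ ‖c‖ := by
    intro r hr0 hr1
    set z : ℝ → ℂ := fun θ => (r : ℂ) * Complex.exp ((θ : ℂ) * Complex.I) with hz_def
    have habs_z : ∀ θ : ℝ, ‖z θ‖ = r := by
      intro θ
      rw [hz_def]
      simp only [norm_mul, Complex.norm_real, Real.norm_eq_abs, Complex.norm_exp]
      simp [_root_.abs_of_pos hr0]
    have hzmem : ∀ θ : ℝ, z θ ∈ unitDisk := by
      intro θ
      rw [hmem_iff, habs_z]
      exact hr1
    have hzc : Continuous z := by
      rw [hz_def]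
      fun_prop
    have hHzcont : Continuous fun θ : ℝ => H (z θ) := by
      rw [continuous_iff_continuousAt]
      intro θ
      exact (hHcont _ (hzmem θ)).comp hzc.continuousAt
    have hcoef : Summable fun k : ℕ => ‖b k * (r : ℂ) ^ (k + 1)‖ := by
      refine (hbsum_norm r hr0.le hr1).congr fun k => ?_
      rw [norm_mul (b k), norm_pow, Complex.norm_real, Real.norm_eq_abs,
        _root_.abs_of_pos hr0]
    -- pointwise expansion of the H-part of the integrand
    have hpt : ∀ (w : ℂ) (μ : ℤ) (θ : ℝ), w * H (z θ) * Complex.exp ((μ : ℂ) * Complex.I * θ)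
        = ∑' k : ℕ, (w * (b k * (r : ℂ) ^ (k + 1)))
            * Complex.exp (((((k : ℤ) + 1) + μ : ℤ) : ℂ) * Complex.I * θ) := by
      intro w μ θ
      have hs := hHsum (z θ) (hzmem θ)
      have hs2 := (hs.mul_left w).mul_right (Complex.exp ((μ : ℂ) * Complex.I * θ))
      rw [← hs2.tsum_eq]
      refine tsum_congr fun k => ?_
      have e1 : (z θ) ^ (k + 1)
          = (r : ℂ) ^ (k + 1) * Complex.exp ((((k + 1 : ℕ)) : ℂ) * ((θ : ℂ) * Complex.I)) := by
        rw [hz_def]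
        simp only
        rw [mul_pow, ← Complex.exp_nat_mul]
      calc w * (b k * (z θ) ^ (k + 1)) * Complex.exp ((μ : ℂ) * Complex.I * θ)
          = (w * (b k * (r : ℂ) ^ (k + 1)))
            * (Complex.exp ((((k + 1 : ℕ)) : ℂ) * ((θ : ℂ) * Complex.I))
                * Complex.exp ((μ : ℂ) * Complex.I * θ)) := by
            rw [e1]
            ring
        _ = (w * (b k * (r : ℂ) ^ (k + 1)))
            * Complex.exp (((((k : ℤ) + 1) + μ : ℤ) : ℂ) * Complex.I * θ) := by
            rw [← Complex.exp_add]
            congr 1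
            push_cast
            ring
    -- pointwise expansion of the conj-H part
    have hptc : ∀ (w : ℂ) (μ : ℤ) (θ : ℝ),
        w * (starRingEnd ℂ) (H (z θ)) * Complex.exp ((μ : ℂ) * Complex.I * θ)
        = ∑' k : ℕ, (w * ((starRingEnd ℂ) (b k) * (r : ℂ) ^ (k + 1)))
            * Complex.exp ((((-((k : ℤ) + 1)) + μ : ℤ) : ℂ) * Complex.I * θ) := by
      intro w μ θ
      have hs := (hHsum (z θ) (hzmem θ)).map (starRingEnd ℂ) continuous_star
      have hs2 := (hs.mul_left w).mul_right (Complex.exp ((μ : ℂ) * Complex.I * θ))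
      rw [← hs2.tsum_eq]
      refine tsum_congr fun k => ?_
      have e0 : (starRingEnd ℂ) (z θ) = (r : ℂ) * Complex.exp (-((θ : ℂ) * Complex.I)) := by
        rw [hz_def]
        simp only [map_mul, Complex.conj_ofReal, ← Complex.exp_conj]
        congr 2
        simp [Complex.conj_I]
      have e1 : (starRingEnd ℂ) ((z θ) ^ (k + 1))
          = (r : ℂ) ^ (k + 1) * Complex.exp ((((k + 1 : ℕ)) : ℂ) * (-((θ : ℂ) * Complex.I))) := by
        rw [map_pow, e0, mul_pow, ← Complex.exp_nat_mul]
      calc w * (starRingEnd ℂ) (b k * (z θ) ^ (k + 1)) * Complex.exp ((μ : ℂ) * Complex.I * θ)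
          = (w * ((starRingEnd ℂ) (b k) * (r : ℂ) ^ (k + 1)))
            * (Complex.exp ((((k + 1 : ℕ)) : ℂ) * (-((θ : ℂ) * Complex.I)))
                * Complex.exp ((μ : ℂ) * Complex.I * θ)) := by
            rw [map_mul, e1]
            ring
        _ = (w * ((starRingEnd ℂ) (b k) * (r : ℂ) ^ (k + 1)))
            * Complex.exp ((((-((k : ℤ) + 1)) + μ : ℤ) : ℂ) * Complex.I * θ) := by
            rw [← Complex.exp_add]
            congr 1
            push_cast
            ring
    -- master formulas for the integrals
    have hcoefw : ∀ w : ℂ, Summable fun k : ℕ => ‖w * (b k * (r : ℂ) ^ (k + 1))‖ := by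
      intro w
      refine (hcoef.mul_left ‖w‖).congr fun k => ?_
      exact (norm_mul w (b k * (r : ℂ) ^ (k + 1))).symm
    have hcoefw' : ∀ w : ℂ, Summable fun k : ℕ =>
        ‖w * ((starRingEnd ℂ) (b k) * (r : ℂ) ^ (k + 1))‖ := by
      intro w
      refine (hcoef.mul_left ‖w‖).congr fun k => ?_
      have h1 : ‖(starRingEnd ℂ) (b k) * (r : ℂ) ^ (k + 1)‖ = ‖b k * (r : ℂ) ^ (k + 1)‖ := by
        rw [norm_mul (a := (starRingEnd ℂ) (b k)), RCLike.norm_conj, ← norm_mul]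
      rw [norm_mul (a := w), h1]
    have master : ∀ (w : ℂ) (μ : ℤ),
        ∫ θ in Set.Ioc (0 : ℝ) (2 * π), w * H (z θ) * Complex.exp ((μ : ℂ) * Complex.I * θ)
        = ∑' k : ℕ, (w * (b k * (r : ℂ) ^ (k + 1)))
            * (if ((k : ℤ) + 1) + μ = 0 then ((2 * π : ℝ) : ℂ) else 0) := by
      intro w μ
      rw [show (fun θ : ℝ => w * H (z θ) * Complex.exp ((μ : ℂ) * Complex.I * θ))
          = fun θ : ℝ => ∑' k : ℕ, (w * (b k * (r : ℂ) ^ (k + 1)))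
            * Complex.exp (((((k : ℤ) + 1) + μ : ℤ) : ℂ) * Complex.I * θ)
        from funext (hpt w μ)]
      exact circle_swap _ _ (hcoefw w)
    have masterc : ∀ (w : ℂ) (μ : ℤ), μ ≤ 0 →
        ∫ θ in Set.Ioc (0 : ℝ) (2 * π),
          w * (starRingEnd ℂ) (H (z θ)) * Complex.exp ((μ : ℂ) * Complex.I * θ) = 0 := by
      intro w μ hμ
      rw [show (fun θ : ℝ => w * (starRingEnd ℂ) (H (z θ)) * Complex.exp ((μ : ℂ) * Complex.I * θ))
          = fun θ : ℝ => ∑' k : ℕ, (w * ((starRingEnd ℂ) (b k) * (r : ℂ) ^ (k + 1)))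
            * Complex.exp ((((-((k : ℤ) + 1)) + μ : ℤ) : ℂ) * Complex.I * θ)
        from funext (hptc w μ), circle_swap _ _ (hcoefw' w)]
      have hz : ∀ k : ℕ, (if (-((k : ℤ) + 1)) + μ = 0 then ((2 * π : ℝ) : ℂ) else 0) = 0 := by
        intro k
        rw [if_neg]
        omega
      simp only [hz, mul_zero]
      exact tsum_zero
    -- the positive kernel
    set P : ℝ → ℝ := fun θ => ‖c‖ ^ 2 + 2 * ((starRingEnd ℂ) c * H (z θ)).re
      with hP_def
    have hPpos : ∀ θ : ℝ, 0 < P θ := fun θ => hQpos (z θ) (hzmem θ)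
    have hGpt : ∀ θ : ℝ, ((P θ : ℝ) : ℂ)
        = ((‖c‖ ^ 2 : ℝ) : ℂ) + ((starRingEnd ℂ) c * H (z θ)
          + c * (starRingEnd ℂ) (H (z θ))) := by
      intro θ
      have h1 : c * (starRingEnd ℂ) (H (z θ))
          = (starRingEnd ℂ) ((starRingEnd ℂ) c * H (z θ)) := by
        rw [map_mul, Complex.conj_conj]
      rw [h1, Complex.add_conj, hP_def]
      push_cast
      ring
    have hicont : ∀ μ : ℤ, Continuous fun θ : ℝ => Complex.exp ((μ : ℂ) * Complex.I * θ) := by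
      intro μ
      fun_prop
    have hint_e1 : ∀ μ : ℤ, MeasureTheory.IntegrableOn
        (fun θ : ℝ => ((‖c‖ ^ 2 : ℝ) : ℂ) * Complex.exp ((μ : ℂ) * Complex.I * θ))
        (Set.Ioc 0 (2 * π)) :=
      fun μ => (continuous_const.mul (hicont μ)).integrableOn_Ioc
    have hint_e2 : ∀ μ : ℤ, MeasureTheory.IntegrableOn
        (fun θ : ℝ => (starRingEnd ℂ) c * H (z θ) * Complex.exp ((μ : ℂ) * Complex.I * θ))
        (Set.Ioc 0 (2 * π)) :=
      fun μ => ((continuous_const.mul hHzcont).mul (hicont μ)).integrableOn_Ioc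
    have hint_e3 : ∀ μ : ℤ, MeasureTheory.IntegrableOn
        (fun θ : ℝ => c * (starRingEnd ℂ) (H (z θ)) * Complex.exp ((μ : ℂ) * Complex.I * θ))
        (Set.Ioc 0 (2 * π)) :=
      fun μ => ((continuous_const.mul (continuous_star.comp hHzcont)).mul
        (hicont μ)).integrableOn_Ioc
    have hsplit : ∀ μ : ℤ,
        ∫ θ in Set.Ioc (0 : ℝ) (2 * π), ((P θ : ℝ) : ℂ) * Complex.exp ((μ : ℂ) * Complex.I * θ)
        = (∫ θ in Set.Ioc (0 : ℝ) (2 * π),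
            ((‖c‖ ^ 2 : ℝ) : ℂ) * Complex.exp ((μ : ℂ) * Complex.I * θ))
          + ((∫ θ in Set.Ioc (0 : ℝ) (2 * π),
            (starRingEnd ℂ) c * H (z θ) * Complex.exp ((μ : ℂ) * Complex.I * θ))
          + (∫ θ in Set.Ioc (0 : ℝ) (2 * π),
            c * (starRingEnd ℂ) (H (z θ)) * Complex.exp ((μ : ℂ) * Complex.I * θ))) := by
      intro μ
      rw [← MeasureTheory.integral_add (hint_e2 μ) (hint_e3 μ),
        ← MeasureTheory.integral_add (hint_e1 μ)
          (g := fun θ : ℝ => (starRingEnd ℂ) c * H (z θ) * Complex.exp ((μ : ℂ) * Complex.I * θ)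
            + c * (starRingEnd ℂ) (H (z θ)) * Complex.exp ((μ : ℂ) * Complex.I * θ))
          ((hint_e2 μ).add (hint_e3 μ))]
      refine MeasureTheory.integral_congr_ae (Filter.Eventually.of_forall fun θ => ?_)
      simp only
      rw [hGpt θ]
      ring
    have hI1 : ∀ μ : ℤ, ∫ θ in Set.Ioc (0 : ℝ) (2 * π),
        ((‖c‖ ^ 2 : ℝ) : ℂ) * Complex.exp ((μ : ℂ) * Complex.I * θ)
        = ((‖c‖ ^ 2 : ℝ) : ℂ) * (if μ = 0 then ((2 * π : ℝ) : ℂ) else 0) := by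
      intro μ
      rw [MeasureTheory.integral_const_mul, circle_exp_integral]
    have hμne : ¬((-(N : ℤ)) = 0) := by omega
    have hQval : ∫ θ in Set.Ioc (0 : ℝ) (2 * π),
        ((P θ : ℝ) : ℂ) * Complex.exp (((-(N : ℤ) : ℤ) : ℂ) * Complex.I * θ)
        = (starRingEnd ℂ) c * (b (N - 1) * (r : ℂ) ^ N) * ((2 * π : ℝ) : ℂ) := by
      rw [hsplit, hI1, if_neg hμne, mul_zero, master, masterc c _ (by omega), add_zero, zero_add]
      rw [tsum_eq_single (N - 1) ?_]
      · rw [if_pos (by omega), show (N - 1) + 1 = N from by omega]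
      · intro k hk
        rw [if_neg (by omega), mul_zero]
    have hQ0val : ∫ θ in Set.Ioc (0 : ℝ) (2 * π),
        ((P θ : ℝ) : ℂ) * Complex.exp ((((0 : ℤ) : ℤ) : ℂ) * Complex.I * θ)
        = ((‖c‖ ^ 2 : ℝ) : ℂ) * ((2 * π : ℝ) : ℂ) := by
      rw [hsplit, hI1, if_pos rfl, master, masterc c _ (by omega)]
      have hz2 : ∀ k : ℕ, (if ((k : ℤ) + 1) + 0 = 0 then ((2 * π : ℝ) : ℂ) else 0) = 0 := by
        intro k
        rw [if_neg (by omega)]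
      simp only [hz2, mul_zero]
      rw [tsum_zero, add_zero, add_zero]
    have hexp0 : (fun θ : ℝ => ((P θ : ℝ) : ℂ) * Complex.exp ((((0 : ℤ) : ℤ) : ℂ) * Complex.I * θ))
        = fun θ : ℝ => ((P θ : ℝ) : ℂ) := by
      funext θ
      norm_num
    have hPint : ∫ θ in Set.Ioc (0 : ℝ) (2 * π), P θ = ‖c‖ ^ 2 * (2 * π) := by
      have h1 : ((∫ θ in Set.Ioc (0 : ℝ) (2 * π), P θ : ℝ) : ℂ)
          = ((‖c‖ ^ 2 * (2 * π) : ℝ) : ℂ) := by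
        calc ((∫ θ in Set.Ioc (0 : ℝ) (2 * π), P θ : ℝ) : ℂ)
            = ∫ θ in Set.Ioc (0 : ℝ) (2 * π), ((P θ : ℝ) : ℂ) := integral_ofReal.symm
          _ = ∫ θ in Set.Ioc (0 : ℝ) (2 * π),
              ((P θ : ℝ) : ℂ) * Complex.exp ((((0 : ℤ) : ℤ) : ℂ) * Complex.I * θ) := by
              rw [← hexp0]
          _ = ((‖c‖ ^ 2 * (2 * π) : ℝ) : ℂ) := by
              rw [hQ0val]
              push_cast
              ring
      exact_mod_cast h1
    have hnorm := MeasureTheory.norm_integral_le_integral_norm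
      (f := fun θ : ℝ => ((P θ : ℝ) : ℂ) * Complex.exp (((-(N : ℤ) : ℤ) : ℂ) * Complex.I * θ))
      (μ := MeasureTheory.volume.restrict (Set.Ioc (0 : ℝ) (2 * π)))
    have hnormval : ∫ θ in Set.Ioc (0 : ℝ) (2 * π),
        ‖((P θ : ℝ) : ℂ) * Complex.exp (((-(N : ℤ) : ℤ) : ℂ) * Complex.I * θ)‖
        = ∫ θ in Set.Ioc (0 : ℝ) (2 * π), P θ := by
      refine MeasureTheory.integral_congr_ae (Filter.Eventually.of_forall fun θ => ?_)
      show ‖((P θ : ℝ) : ℂ) * Complex.exp (((-(N : ℤ) : ℤ) : ℂ) * Complex.I * θ)‖ = P θ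
      rw [norm_mul, Complex.norm_real, Real.norm_eq_abs,
        Complex.norm_exp]
      have hre : (((-(N : ℤ) : ℤ) : ℂ) * Complex.I * θ).re = 0 := by
        simp
      rw [hre, Real.exp_zero, mul_one, _root_.abs_of_pos (hPpos θ)]
    rw [hQval, hnormval, hPint] at hnorm
    have hlhs : ‖(starRingEnd ℂ) c * (b (N - 1) * (r : ℂ) ^ N) * ((2 * π : ℝ) : ℂ)‖
        = ‖c‖ * (‖b (N - 1)‖ * r ^ N) * (2 * π) := by
      simp only [norm_mul, norm_pow, Complex.norm_conj,
        Complex.norm_real, Real.norm_eq_abs]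
      rw [_root_.abs_of_pos hr0, abs_two, _root_.abs_of_pos Real.pi_pos]
    rw [hlhs] at hnorm
    have h2π : (0 : ℝ) < 2 * π := by positivity
    have h3 := le_of_mul_le_mul_right hnorm h2π
    rw [pow_two] at h3
    exact le_of_mul_le_mul_left h3 habsc_pos
  -- let r → 1
  have hlim : ‖b (N - 1)‖ ≤ ‖c‖ := by
    have hcont : Filter.Tendsto (fun r : ℝ => ‖b (N - 1)‖ * r ^ N)
        (nhdsWithin 1 (Set.Iio 1)) (nhds (‖b (N - 1)‖ * 1 ^ N)) :=
      ((continuous_const.mul (continuous_pow N)).tendsto 1).mono_left nhdsWithin_le_nhds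
    have hev : ∀ᶠ r in nhdsWithin (1 : ℝ) (Set.Iio 1),
        ‖b (N - 1)‖ * r ^ N ≤ ‖c‖ := by
      filter_upwards [Ioo_mem_nhdsLT_of_mem (Set.mem_Ioc.mpr ⟨zero_lt_one, le_refl 1⟩)]
        with r hr
      exact key r hr.1 hr.2
    have h1 := le_of_tendsto hcont hev
    simpa using h1
  -- conclude
  have hn2 : (2 : ℝ) ≤ (n : ℝ) := by exact_mod_cast hn
  have hden : (0 : ℝ) < 1 + ϑ * ((n : ℝ) - 1) := by nlinarith
  have hbn : ‖b (N - 1)‖ = (1 + ϑ * ((n : ℝ) - 1)) * ‖a n‖ := by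
    rw [hb_def]
    simp only [norm_mul, Complex.norm_real, Real.norm_eq_abs]
    have h1 : ((N - 1 : ℕ) : ℝ) + 1 = (n : ℝ) - 1 := by
      have h2 : N - 1 = n - 2 := by omega
      rw [h2]
      have h3 : ((n - 2 : ℕ) : ℝ) = (n : ℝ) - 2 := by
        push_cast [Nat.cast_sub hn]
        ring
      rw [h3]
      ring
    have h4 : (N - 1) + 2 = n := by omega
    rw [h1, h4, _root_.abs_of_pos hden]
  rw [hbn] at hlim
  rw [← habsc, le_div_iff₀ hden]
  linarith
end
end

section
/- Let m ≥ 1 be an integer, 0 < q < 1, |ξ| < π/2, 0 ≤ ρ < 1 and 0 ≤ γ < 1. If [ (1-ρ) sec ξ + ρ(1-γ) ] · q m / (1-q)^{m+1} ≤ 1 - γ, then the Pascal distribution series Θ_q^m belongs to the class 𝒮(ξ, γ, ρ). -/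
noncomputable section

open Complex Real Set

namespace Stmt5Aux

noncomputable def aa (M : ℕ) (q : ℝ) (n : ℕ) : ℝ :=
  ((n + M + 1).choose M : ℝ) * q ^ (n + 1) * (1 - q) ^ (M + 1)

variable {M : ℕ} {q : ℝ}

lemma aa_nonneg (hq0 : 0 < q) (hq1 : q < 1) (n : ℕ) : 0 ≤ aa M q n := by
  unfold aa
  have h1 : (0:ℝ) ≤ 1 - q := by linarith
  positivity

lemma hasSum_aa (hq0 : 0 < q) (hq1 : q < 1) :
    HasSum (aa M q) (1 - (1 - q) ^ (M + 1)) := by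
  have hr : ‖q‖ < 1 := by rw [Real.norm_eq_abs, abs_of_pos hq0]; exact hq1
  have hne : ((1:ℝ) - q) ^ (M + 1) ≠ 0 := pow_ne_zero _ (by linarith)
  have h := (hasSum_choose_mul_geometric_of_norm_lt_one (𝕜 := ℝ) M hr).mul_right
    ((1 - q) ^ (M + 1))
  rw [one_div, inv_mul_cancel₀ hne] at h
  have h2 := (hasSum_nat_add_iff' 1).mpr h
  have hfe : (aa M q) = fun n =>
      (((n + 1) + M).choose M : ℝ) * q ^ (n + 1) * (1 - q) ^ (M + 1) := by
    funext n; unfold aa; rw [show n + M + 1 = n + 1 + M by omega]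
  rw [hfe]
  convert h2 using 1
  · rfl
  simp [Nat.choose_self]

lemma hasSum_mul_aa (hq0 : 0 < q) (hq1 : q < 1) :
    HasSum (fun n : ℕ => ((n : ℝ) + 1) * aa M q n) (((M : ℝ) + 1) * q / (1 - q)) := by
  have hr : ‖q‖ < 1 := by rw [Real.norm_eq_abs, abs_of_pos hq0]; exact hq1
  have h1q : (0:ℝ) < 1 - q := by linarith
  have h := (hasSum_choose_mul_geometric_of_norm_lt_one (𝕜 := ℝ) (M + 1) hr).mul_left
    (((M : ℝ) + 1) * q * (1 - q) ^ (M + 1))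
  convert h using 1
  · rfl
  · funext n
    have key : (n + M + 1).choose (M + 1) * (M + 1) = (n + M + 1).choose M * (n + 1) := by
      rw [Nat.choose_succ_right_eq]; congr 1; omega
    have keyR : ((n + M + 1).choose (M + 1) : ℝ) * ((M : ℝ) + 1)
        = ((n + M + 1).choose M : ℝ) * ((n : ℝ) + 1) := by exact_mod_cast key
    have hidx : n + (M + 1) = n + M + 1 := by omega
    unfold aa
    rw [hidx]
    rw [pow_succ q n]
    linear_combination (-(q ^ n * q * (1 - q) ^ (M + 1))) * keyR
  · rw [pow_succ (1 - q) (M + 1)]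
    field_simp

lemma hasSum_two_aa (hq0 : 0 < q) (hq1 : q < 1) :
    HasSum (fun n : ℕ => ((n : ℝ) + 2) * aa M q n)
      (((M : ℝ) + 1) * q / (1 - q) + (1 - (1 - q) ^ (M + 1))) := by
  have h := (hasSum_mul_aa (M := M) hq0 hq1).add (hasSum_aa (M := M) hq0 hq1)
  convert h using 1
  funext n; ring


noncomputable def TT (M : ℕ) (q : ℝ) : ℂ → ℂ :=
  fun z => ∑' n : ℕ, ((aa M q n : ℝ) : ℂ) * z ^ (n + 2)

noncomputable def DD (M : ℕ) (q : ℝ) (z : ℂ) : ℂ :=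
  ∑' n : ℕ, ((n : ℂ) + 2) * ((aa M q n : ℝ) : ℂ) * z ^ (n + 1)

lemma norm_aaC (hq0 : 0 < q) (hq1 : q < 1) (n : ℕ) : ‖((aa M q n : ℝ) : ℂ)‖ = aa M q n := by
  rw [Complex.norm_real, Real.norm_eq_abs, _root_.abs_of_nonneg (aa_nonneg hq0 hq1 n)]

lemma norm_term_le (hq0 : 0 < q) (hq1 : q < 1) {z : ℂ} (hz : ‖z‖ < 1) (n : ℕ) :
    ‖((aa M q n : ℝ) : ℂ) * z ^ (n + 2)‖ ≤ aa M q n * ‖z‖ ^ 2 := by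
  rw [norm_mul, norm_aaC hq0 hq1, norm_pow]
  apply mul_le_mul_of_nonneg_left _ (aa_nonneg hq0 hq1 n)
  exact pow_le_pow_of_le_one (norm_nonneg z) hz.le (by omega)

lemma summable_aaC (hq0 : 0 < q) (hq1 : q < 1) {z : ℂ} (hz : ‖z‖ < 1) :
    Summable (fun n : ℕ => ((aa M q n : ℝ) : ℂ) * z ^ (n + 2)) := by
  apply Summable.of_norm_bounded (hasSum_aa (M := M) hq0 hq1).summable
  intro n
  rw [norm_mul, norm_aaC hq0 hq1, norm_pow]
  calc aa M q n * ‖z‖ ^ (n + 2) ≤ aa M q n * 1 := by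
        apply mul_le_mul_of_nonneg_left _ (aa_nonneg hq0 hq1 n)
        exact pow_le_one₀ (norm_nonneg z) hz.le
    _ = aa M q n := mul_one _

lemma norm_term2_le (hq0 : 0 < q) (hq1 : q < 1) {z : ℂ} (hz : ‖z‖ < 1) (n : ℕ) :
    ‖((n : ℂ) + 2) * ((aa M q n : ℝ) : ℂ) * z ^ (n + 2)‖ ≤ ((n : ℝ) + 2) * aa M q n * ‖z‖ ^ 2 := by
  have hn : ‖((n : ℂ) + 2)‖ = (n : ℝ) + 2 := by
    rw [show ((n : ℂ) + 2) = (((n + 2 : ℕ) : ℝ) : ℂ) by push_cast; ring, Complex.norm_real,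
      Real.norm_eq_abs, _root_.abs_of_nonneg (by positivity)]
    push_cast; ring
  rw [norm_mul, norm_mul, hn, norm_aaC hq0 hq1, norm_pow]
  have hp : ‖z‖ ^ (n + 2) ≤ ‖z‖ ^ 2 := pow_le_pow_of_le_one (norm_nonneg z) hz.le (by omega)
  exact mul_le_mul_of_nonneg_left hp (mul_nonneg (by positivity) (aa_nonneg hq0 hq1 n))

lemma summable_aaC2 (hq0 : 0 < q) (hq1 : q < 1) {z : ℂ} (hz : ‖z‖ < 1) :
    Summable (fun n : ℕ => ((n : ℂ) + 2) * ((aa M q n : ℝ) : ℂ) * z ^ (n + 2)) := by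
  apply Summable.of_norm_bounded ((hasSum_two_aa (M := M) hq0 hq1).summable.mul_right (‖z‖ ^ 2))
  intro n
  exact norm_term2_le hq0 hq1 hz n

lemma hasDerivAt_TT (hq0 : 0 < q) (hq1 : q < 1) {z : ℂ} (hz : z ∈ Metric.ball (0 : ℂ) 1) :
    HasDerivAt (TT M q) (DD M q z) z := by
  have hu : Summable (fun n : ℕ => ((n : ℝ) + 2) * aa M q n) := (hasSum_two_aa hq0 hq1).summable
  refine hasDerivAt_tsum_of_isPreconnected hu Metric.isOpen_ball
    (convex_ball (0 : ℂ) 1).isPreconnected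
    (g := fun (n : ℕ) (w : ℂ) => ((aa M q n : ℝ) : ℂ) * w ^ (n + 2))
    (g' := fun (n : ℕ) (w : ℂ) => ((n : ℂ) + 2) * ((aa M q n : ℝ) : ℂ) * w ^ (n + 1))
    ?_ ?_ (Metric.mem_ball_self one_pos) ?_ hz
  · intro n y _
    have h := (hasDerivAt_pow (n + 2) y).const_mul ((aa M q n : ℝ) : ℂ)
    convert h using 1
    · rfl
    rw [show n + 2 - 1 = n + 1 by omega]
    push_cast
    ring
  · intro n y hy
    rw [Metric.mem_ball, dist_zero_right] at hy
    have hn : ‖((n : ℂ) + 2)‖ = (n : ℝ) + 2 := by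
      rw [show ((n : ℂ) + 2) = (((n + 2 : ℕ) : ℝ) : ℂ) by push_cast; ring, Complex.norm_real,
        Real.norm_eq_abs, _root_.abs_of_nonneg (by positivity)]
      push_cast; ring
    rw [norm_mul, norm_mul, hn, norm_aaC hq0 hq1, norm_pow]
    calc ((n : ℝ) + 2) * aa M q n * ‖y‖ ^ (n + 1)
        ≤ ((n : ℝ) + 2) * aa M q n * 1 := by
          apply mul_le_mul_of_nonneg_left _ (mul_nonneg (by positivity) (aa_nonneg hq0 hq1 n))
          exact pow_le_one₀ (norm_nonneg y) hy.le
      _ = ((n : ℝ) + 2) * aa M q n := mul_one _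
  · apply Summable.of_norm_bounded (hasSum_aa (M := M) hq0 hq1).summable
    intro n
    rw [norm_mul, norm_aaC hq0 hq1, norm_pow, norm_zero, zero_pow (by omega), mul_zero]
    exact aa_nonneg hq0 hq1 n


lemma norm_term1_le (hq0 : 0 < q) (hq1 : q < 1) {z : ℂ} (hz : ‖z‖ < 1) (n : ℕ) :
    ‖((n : ℂ) + 1) * ((aa M q n : ℝ) : ℂ) * z ^ (n + 2)‖ ≤ ((n : ℝ) + 1) * aa M q n * ‖z‖ ^ 2 := by
  have hn : ‖((n : ℂ) + 1)‖ = (n : ℝ) + 1 := by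
    rw [show ((n : ℂ) + 1) = (((n + 1 : ℕ) : ℝ) : ℂ) by push_cast; ring, Complex.norm_real,
      Real.norm_eq_abs, _root_.abs_of_nonneg (by positivity)]
    push_cast; ring
  rw [norm_mul, norm_mul, hn, norm_aaC hq0 hq1, norm_pow]
  have hp : ‖z‖ ^ (n + 2) ≤ ‖z‖ ^ 2 := pow_le_pow_of_le_one (norm_nonneg z) hz.le (by omega)
  exact mul_le_mul_of_nonneg_left hp (mul_nonneg (by positivity) (aa_nonneg hq0 hq1 n))

lemma norm_add_lower (z u : ℂ) : ‖z‖ - ‖u‖ ≤ ‖z + u‖ := by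
  have h3 : ‖z‖ ≤ ‖z + u‖ + ‖u‖ := by simpa using norm_add_le (z + u) (-u)
  linarith

lemma pow_sub_pow_norm_le (z1 z2 : ℂ) {r : ℝ} (h1 : ‖z1‖ ≤ r) (h2 : ‖z2‖ ≤ r) (k : ℕ) :
    ‖z1 ^ k - z2 ^ k‖ ≤ (k : ℝ) * r ^ (k - 1) * ‖z1 - z2‖ := by
  have hr0 : 0 ≤ r := le_trans (norm_nonneg z1) h1
  rw [← geom_sum₂_mul z1 z2 k, norm_mul]
  apply mul_le_mul_of_nonneg_right _ (norm_nonneg _)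
  calc ‖∑ i ∈ Finset.range k, z1 ^ i * z2 ^ (k - 1 - i)‖
      ≤ ∑ i ∈ Finset.range k, ‖z1 ^ i * z2 ^ (k - 1 - i)‖ := norm_sum_le _ _
    _ ≤ ∑ i ∈ Finset.range k, r ^ (k - 1) := by
        apply Finset.sum_le_sum; intro i hi
        rw [Finset.mem_range] at hi
        rw [norm_mul, norm_pow, norm_pow]
        calc ‖z1‖ ^ i * ‖z2‖ ^ (k - 1 - i)
            ≤ r ^ i * r ^ (k - 1 - i) := by
              apply mul_le_mul (pow_le_pow_left₀ (norm_nonneg _) h1 i)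
                (pow_le_pow_left₀ (norm_nonneg _) h2 _) (by positivity) (by positivity)
          _ = r ^ (k - 1) := by rw [← pow_add]; congr 1; omega
    _ = (k : ℝ) * r ^ (k - 1) := by
        rw [Finset.sum_const, Finset.card_range, nsmul_eq_mul]

end Stmt5Aux

open Stmt5Aux

set_option maxHeartbeats 1000000 in
/-- Theorem 1, `Θ_q^m ∈ 𝒮(ξ, γ, ρ)`. -/
theorem stmt5 (m : ℕ) (hm : 1 ≤ m) (q : ℝ) (hq0 : 0 < q) (hq1 : q < 1)
    (ξ ρ γ : ℝ) (hξ : |ξ| < π / 2) (hρ0 : 0 ≤ ρ) (hρ1 : ρ < 1)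
    (hγ0 : 0 ≤ γ) (hγ1 : γ < 1)
    (h : ((1 - ρ) * (Real.cos ξ)⁻¹ + ρ * (1 - γ)) * (q * m / (1 - q) ^ (m + 1)) ≤ 1 - γ) :
    SpiralS ξ γ ρ (pascalTheta m q) := by
  obtain ⟨M, rfl⟩ : ∃ M, m = M + 1 := ⟨m - 1, by omega⟩
  clear hm
  push_cast at h
  have h1q : (0:ℝ) < 1 - q := by linarith
  have hc0 : 0 < Real.cos ξ :=
    Real.cos_pos_of_mem_Ioo ⟨(abs_lt.mp hξ).1, (abs_lt.mp hξ).2⟩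
  have hc1 : Real.cos ξ ≤ 1 := Real.cos_le_one ξ
  have hP1pos : 0 < (1 - q) ^ (M + 1) := pow_pos h1q _
  have hP1le : (1 - q) ^ (M + 1) ≤ 1 := pow_le_one₀ (by linarith) (by linarith)
  have hS0n : (0:ℝ) ≤ 1 - (1 - q) ^ (M + 1) := by linarith
  have hS1n : (0:ℝ) ≤ ((M:ℝ) + 1) * q / (1 - q) := by positivity
  -- the coefficient inequality
  have hX : q * ((M:ℝ) + 1) / (1 - q) ^ (M + 1 + 1) * (1 - q) ^ (M + 1)
      = ((M:ℝ) + 1) * q / (1 - q) := by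
    rw [pow_succ]; field_simp
  have hK : (1 - ρ) * (((M:ℝ) + 1) * q / (1 - q)) +
      (1 - γ) * Real.cos ξ * ((1 - (1 - q) ^ (M + 1)) + ρ * (((M:ℝ) + 1) * q / (1 - q)))
      ≤ (1 - γ) * Real.cos ξ := by
    have hmul := mul_le_mul_of_nonneg_right h (le_of_lt (mul_pos hc0 hP1pos))
    have hexp : ((1 - ρ) * (Real.cos ξ)⁻¹ + ρ * (1 - γ)) *
        (q * ((M:ℝ) + 1) / (1 - q) ^ (M + 1 + 1)) * (Real.cos ξ * (1 - q) ^ (M + 1))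
        = (1 - ρ) * (((M:ℝ) + 1) * q / (1 - q)) +
          ρ * (1 - γ) * Real.cos ξ * (((M:ℝ) + 1) * q / (1 - q)) := by
      rw [← hX]; field_simp
    rw [hexp] at hmul
    nlinarith [hmul]
  have hSle : (1 - (1 - q) ^ (M + 1)) + ((M:ℝ) + 1) * q / (1 - q) ≤ 1 := by
    have hcinv : 1 ≤ (Real.cos ξ)⁻¹ := by
      rw [← one_div]; exact (le_div_iff₀ hc0).mpr (by linarith)
    have hC1 : 1 - γ ≤ (1 - ρ) * (Real.cos ξ)⁻¹ + ρ * (1 - γ) := by nlinarith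
    have hXpos : (0:ℝ) ≤ q * ((M:ℝ) + 1) / (1 - q) ^ (M + 1 + 1) := by positivity
    have hX1 : q * ((M:ℝ) + 1) / (1 - q) ^ (M + 1 + 1) ≤ 1 := by
      nlinarith [mul_le_mul_of_nonneg_right hC1 hXpos]
    have hS1P : ((M:ℝ) + 1) * q / (1 - q) ≤ (1 - q) ^ (M + 1) := by
      rw [← hX]; nlinarith
    linarith
  -- analytic structure
  have pascal_eq : pascalTheta (M + 1) q = fun z => z + TT M q z := by
    funext z
    unfold pascalTheta TT
    congr 1
    apply tsum_congr; intro n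
    simp only [Nat.add_sub_cancel]
    rw [show n + (M + 1) = n + M + 1 from rfl]
    unfold aa
    push_cast
    ring
  have hfd : ∀ w : ℂ, w ∈ Metric.ball (0:ℂ) 1 →
      HasDerivAt (pascalTheta (M + 1) q) (1 + DD M q w) w := by
    intro w hw
    rw [pascal_eq]
    exact (hasDerivAt_id w).add (hasDerivAt_TT hq0 hq1 hw)
  have hderiv : ∀ w ∈ Metric.ball (0:ℂ) 1,
      deriv (pascalTheta (M + 1) q) w = 1 + DD M q w := fun w hw => (hfd w hw).deriv
  have h0mem : (0:ℂ) ∈ Metric.ball (0:ℂ) 1 := Metric.mem_ball_self one_pos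
  refine ⟨⟨?_, ?_, ?_⟩, ?_, ?_⟩
  · -- AnalyticOn
    have hdo : DifferentiableOn ℂ (pascalTheta (M + 1) q) (Metric.ball 0 1) :=
      fun w hw => ((hfd w hw).differentiableAt).differentiableWithinAt
    exact hdo.analyticOn Metric.isOpen_ball
  · -- f 0 = 0
    rw [pascal_eq]
    simp [TT]
  · -- deriv f 0 = 1
    rw [hderiv 0 h0mem]
    simp [DD]
  · -- InjOn
    intro z1 hz1 z2 hz2 heq
    rw [show unitDisk = Metric.ball (0:ℂ) 1 from rfl, mem_ball_zero_iff] at hz1 hz2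
    by_contra hne
    have hd0 : 0 < ‖z1 - z2‖ := by
      rw [norm_pos_iff]; exact sub_ne_zero.mpr hne
    set r : ℝ := max ‖z1‖ ‖z2‖ with hrdef
    have hr0 : 0 ≤ r := le_trans (norm_nonneg z1) (le_max_left _ _)
    have hr1 : r < 1 := max_lt hz1 hz2
    rw [pascal_eq] at heq
    simp only at heq
    have hdiff : z1 - z2 = TT M q z2 - TT M q z1 := by linear_combination heq
    have hTTrep : TT M q z2 - TT M q z1
        = ∑' n : ℕ, ((aa M q n : ℝ) : ℂ) * (z2 ^ (n + 2) - z1 ^ (n + 2)) := by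
      rw [TT, TT, ← Summable.tsum_sub (summable_aaC hq0 hq1 hz2) (summable_aaC hq0 hq1 hz1)]
      apply tsum_congr; intro n; ring
    have hbound : ‖TT M q z2 - TT M q z1‖
        ≤ ((((M:ℝ) + 1) * q / (1 - q) + (1 - (1 - q) ^ (M + 1)))) * (r * ‖z1 - z2‖) := by
      rw [hTTrep]
      apply tsum_of_norm_bounded ((hasSum_two_aa (M := M) hq0 hq1).mul_right (r * ‖z1 - z2‖))
      intro n
      have hpow : r ^ (n + 1) ≤ r := by
        calc r ^ (n + 1) ≤ r ^ 1 := pow_le_pow_of_le_one hr0 hr1.le (by omega)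
          _ = r := pow_one r
      have hps := pow_sub_pow_norm_le z2 z1 (le_max_right ‖z1‖ ‖z2‖) (le_max_left ‖z1‖ ‖z2‖) (n + 2)
      rw [show n + 2 - 1 = n + 1 from rfl] at hps
      have hnn : ‖z2 - z1‖ = ‖z1 - z2‖ := by rw [← norm_neg]; congr 1; ring
      rw [hnn] at hps
      calc ‖((aa M q n : ℝ) : ℂ) * (z2 ^ (n + 2) - z1 ^ (n + 2))‖
          = aa M q n * ‖z2 ^ (n + 2) - z1 ^ (n + 2)‖ := by rw [norm_mul, norm_aaC hq0 hq1]
        _ ≤ aa M q n * (((n:ℝ) + 2) * r ^ (n + 1) * ‖z1 - z2‖) := by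
            apply mul_le_mul_of_nonneg_left _ (aa_nonneg hq0 hq1 n)
            convert hps using 2
            · rfl
            push_cast; ring
        _ ≤ ((n:ℝ) + 2) * aa M q n * (r * ‖z1 - z2‖) := by
            nlinarith [mul_le_mul_of_nonneg_left hpow
              (mul_nonneg (mul_nonneg (by positivity : (0:ℝ) ≤ (n:ℝ) + 2)
                (aa_nonneg (M := M) hq0 hq1 n)) hd0.le)]
    rw [← hdiff] at hbound
    have h1 : ((((M:ℝ) + 1) * q / (1 - q) + (1 - (1 - q) ^ (M + 1)))) * (r * ‖z1 - z2‖)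
        ≤ 1 * (r * ‖z1 - z2‖) :=
      mul_le_mul_of_nonneg_right (by linarith) (mul_nonneg hr0 hd0.le)
    have h2 : r * ‖z1 - z2‖ < 1 * ‖z1 - z2‖ := mul_lt_mul_of_pos_right hr1 hd0
    rw [one_mul] at h1 h2
    linarith
  · -- the main condition
    intro z hz hz0
    have hz1 : ‖z‖ < 1 := by
      rw [show unitDisk = Metric.ball (0:ℂ) 1 from rfl, mem_ball_zero_iff] at hz
      exact hz
    have hzmem : z ∈ Metric.ball (0:ℂ) 1 := by rwa [mem_ball_zero_iff]
    have hr0 : 0 < ‖z‖ := norm_pos_iff.mpr hz0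
    rw [hderiv z hzmem, pascal_eq]
    simp only
    -- notation
    have hnρ1 : ‖(1 - (ρ:ℂ))‖ = 1 - ρ := by
      rw [show (1 - (ρ:ℂ)) = (((1 - ρ : ℝ)) : ℂ) by push_cast; ring, Complex.norm_real,
        Real.norm_eq_abs, _root_.abs_of_nonneg (by linarith)]
    have hnρ : ‖(ρ:ℂ)‖ = ρ := by
      rw [Complex.norm_real, Real.norm_eq_abs, _root_.abs_of_nonneg hρ0]
    -- tsum representations
    have hzDD : z * DD M q z = ∑' n : ℕ, ((n:ℂ) + 2) * ((aa M q n : ℝ) : ℂ) * z ^ (n + 2) := by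
      rw [DD, ← tsum_mul_left]
      apply tsum_congr; intro n; ring
    have hsubrep : z * DD M q z - TT M q z
        = ∑' n : ℕ, ((n:ℂ) + 1) * ((aa M q n : ℝ) : ℂ) * z ^ (n + 2) := by
      rw [hzDD, TT, ← Summable.tsum_sub (summable_aaC2 hq0 hq1 hz1) (summable_aaC hq0 hq1 hz1)]
      apply tsum_congr; intro n; ring
    have hPb : ‖TT M q z‖ ≤ (1 - (1 - q) ^ (M + 1)) * ‖z‖ ^ 2 := by
      rw [TT]
      exact tsum_of_norm_bounded ((hasSum_aa (M := M) hq0 hq1).mul_right (‖z‖ ^ 2))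
        (norm_term_le hq0 hq1 hz1)
    have hQb : ‖z * DD M q z‖
        ≤ (((M:ℝ) + 1) * q / (1 - q) + (1 - (1 - q) ^ (M + 1))) * ‖z‖ ^ 2 := by
      rw [hzDD]
      exact tsum_of_norm_bounded ((hasSum_two_aa (M := M) hq0 hq1).mul_right (‖z‖ ^ 2))
        (norm_term2_le hq0 hq1 hz1)
    have hQPb : ‖z * DD M q z - TT M q z‖ ≤ (((M:ℝ) + 1) * q / (1 - q)) * ‖z‖ ^ 2 := by
      rw [hsubrep]
      exact tsum_of_norm_bounded ((hasSum_mul_aa (M := M) hq0 hq1).mul_right (‖z‖ ^ 2))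
        (norm_term1_le hq0 hq1 hz1)
    set S0 := 1 - (1 - q) ^ (M + 1) with hS0d
    set S1 := ((M:ℝ) + 1) * q / (1 - q) with hS1d
    set P := TT M q z with hPdef
    set Ed := DD M q z with hEdef
    set Dden := (1 - (ρ:ℂ)) * (z + P) + (ρ:ℂ) * z * (1 + Ed) with hDd
    have hDrep : Dden = z + ((1 - (ρ:ℂ)) * P + (ρ:ℂ) * (z * Ed)) := by rw [hDd]; ring
    have huB : ‖(1 - (ρ:ℂ)) * P + (ρ:ℂ) * (z * Ed)‖ ≤ (S0 + ρ * S1) * ‖z‖ ^ 2 := by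
      calc ‖(1 - (ρ:ℂ)) * P + (ρ:ℂ) * (z * Ed)‖
          ≤ ‖(1 - (ρ:ℂ)) * P‖ + ‖(ρ:ℂ) * (z * Ed)‖ := norm_add_le _ _
        _ = (1 - ρ) * ‖P‖ + ρ * ‖z * Ed‖ := by rw [norm_mul, norm_mul, hnρ1, hnρ]
        _ ≤ (1 - ρ) * (S0 * ‖z‖ ^ 2) + ρ * ((S1 + S0) * ‖z‖ ^ 2) :=
            add_le_add (mul_le_mul_of_nonneg_left hPb (by linarith))
              (mul_le_mul_of_nonneg_left hQb hρ0)
        _ = (S0 + ρ * S1) * ‖z‖ ^ 2 := by ring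
    have hDlow : ‖z‖ - (S0 + ρ * S1) * ‖z‖ ^ 2 ≤ ‖Dden‖ := by
      rw [hDrep]
      have h4 := norm_add_lower z ((1 - (ρ:ℂ)) * P + (ρ:ℂ) * (z * Ed))
      linarith
    have hDpos : 0 < ‖Dden‖ := by
      have hA : S0 + ρ * S1 ≤ 1 := by nlinarith
      nlinarith [mul_lt_mul_of_pos_left hz1 hr0, mul_le_mul_of_nonneg_right hA (sq_nonneg ‖z‖)]
    have hDne : Dden ≠ 0 := by
      intro h0; rw [h0, norm_zero] at hDpos; exact lt_irrefl 0 hDpos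
    refine ⟨hDne, ?_⟩
    have hND : z * (1 + Ed) - Dden = (1 - (ρ:ℂ)) * (z * Ed - P) := by rw [hDd]; ring
    have hEb : ‖z * (1 + Ed) - Dden‖ ≤ (1 - ρ) * (S1 * ‖z‖ ^ 2) := by
      rw [hND, norm_mul, hnρ1]
      exact mul_le_mul_of_nonneg_left hQPb (by linarith)
    have hKey : ‖z * (1 + Ed) - Dden‖ < (1 - γ) * Real.cos ξ * ‖Dden‖ := by
      have h1 := mul_le_mul_of_nonneg_right hK (sq_nonneg ‖z‖)
      have h2 : (1 - γ) * Real.cos ξ * (‖z‖ * ‖z‖) < (1 - γ) * Real.cos ξ * ‖z‖ := by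
        have h5 := mul_lt_mul_of_pos_left hz1
          (mul_pos (mul_pos (by linarith : (0:ℝ) < 1 - γ) hc0) hr0)
        nlinarith [h5]
      have h3 := mul_le_mul_of_nonneg_left hDlow
        (mul_nonneg (by linarith : (0:ℝ) ≤ 1 - γ) hc0.le)
      nlinarith [hEb, h1, h2, h3]
    have hwre : (Complex.exp (I * (ξ:ℂ))).re = Real.cos ξ := by
      rw [mul_comm, Complex.exp_mul_I]
      simp [← Complex.ofReal_cos, ← Complex.ofReal_sin]
    have hwnorm : ‖Complex.exp (I * (ξ:ℂ))‖ = 1 := by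
      rw [Complex.norm_exp]
      simp
    have hsplit : Complex.exp (I * (ξ:ℂ)) * (z * (1 + Ed)) / Dden
        = Complex.exp (I * (ξ:ℂ)) + Complex.exp (I * (ξ:ℂ)) * ((z * (1 + Ed) - Dden) / Dden) := by
      field_simp
      ring
    rw [hsplit, Complex.add_re]
    have habs : ‖Complex.exp (I * (ξ:ℂ)) * ((z * (1 + Ed) - Dden) / Dden)‖
        < (1 - γ) * Real.cos ξ := by
      rw [norm_mul, hwnorm, one_mul, norm_div]
      exact (div_lt_iff₀ hDpos).mpr (by linarith [hKey])
    have hge := Complex.abs_re_le_norm (Complex.exp (I * (ξ:ℂ)) * ((z * (1 + Ed) - Dden) / Dden))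
    have hre : -‖Complex.exp (I * (ξ:ℂ)) * ((z * (1 + Ed) - Dden) / Dden)‖
        ≤ (Complex.exp (I * (ξ:ℂ)) * ((z * (1 + Ed) - Dden) / Dden)).re := by
      have h6 := neg_abs_le ((Complex.exp (I * (ξ:ℂ)) * ((z * (1 + Ed) - Dden) / Dden)).re)
      linarith
    rw [hwre]
    linarith
end
end

section
/- Let m ≥ 1 be an integer, 0 < q < 1, |ξ| < π/2, 0 ≤ ρ < 1 and 0 ≤ γ < 1. If [ (1-ρ) sec ξ + ρ(1-γ) ] · q m / (1-q)^{m+1} ≤ 1 - γ, then the integral operator 𝒢_q^m(z) = ∫_0^z Θ_q^m(t)/t dt belongs to the class 𝒦(ξ, γ, ρ). -/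
noncomputable section

open Complex Real Set

def cc (m : ℕ) (q : ℝ) (n : ℕ) : ℝ := ((n + m).choose (m - 1) : ℝ) * q ^ (n + 1) * (1 - q) ^ m

lemma cc_nonneg (m : ℕ) {q : ℝ} (hq0 : 0 < q) (hq1 : q < 1) (n : ℕ) : 0 ≤ cc m q n := by
  unfold cc
  have h1 : (0:ℝ) ≤ 1 - q := by linarith
  positivity

lemma hasSum_cc {m : ℕ} (hm : 1 ≤ m) {q : ℝ} (hq0 : 0 < q) (hq1 : q < 1) :
    HasSum (cc m q) (1 - (1 - q) ^ m) := by
  obtain ⟨k, rfl⟩ : ∃ k, m = k + 1 := ⟨m - 1, by omega⟩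
  have hq : ‖q‖ < 1 := by rw [Real.norm_eq_abs, abs_lt]; constructor <;> linarith
  have h1q : (0:ℝ) < 1 - q := by linarith
  have H := hasSum_choose_mul_geometric_of_norm_lt_one (𝕜 := ℝ) k hq
  have H2 : HasSum (fun n : ℕ => (((n + 1) + k).choose k : ℝ) * q ^ (n + 1))
      (1 / (1 - q) ^ (k + 1) - 1) := by
    have := (hasSum_nat_add_iff' (f := fun n : ℕ => (((n + k).choose k : ℝ)) * q ^ n) 1).2 H
    simpa using this
  have H3 := H2.mul_right ((1 - q) ^ (k + 1))
  have he : (1 / (1 - q) ^ (k + 1) - 1) * (1 - q) ^ (k + 1) = 1 - (1 - q) ^ (k + 1) := by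
    field_simp
  rw [he] at H3
  convert H3 using 2 with n
  · rfl
  unfold cc
  simp only [Nat.add_sub_cancel]
  have hnk : n + (k + 1) = n + 1 + k := by omega
  rw [hnk]

lemma hasSum_cc' {m : ℕ} (hm : 1 ≤ m) {q : ℝ} (hq0 : 0 < q) (hq1 : q < 1) :
    HasSum (fun n : ℕ => ((n : ℝ) + 1) * cc m q n) (m * q / (1 - q)) := by
  obtain ⟨k, rfl⟩ : ∃ k, m = k + 1 := ⟨m - 1, by omega⟩
  have hq : ‖q‖ < 1 := by rw [Real.norm_eq_abs, abs_lt]; constructor <;> linarith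
  have h1q : (0:ℝ) < 1 - q := by linarith
  have H := hasSum_choose_mul_geometric_of_norm_lt_one (𝕜 := ℝ) (k + 1) hq
  have H3 := H.mul_left (((k : ℝ) + 1) * q * (1 - q) ^ (k + 1))
  have he : ((k : ℝ) + 1) * q * (1 - q) ^ (k + 1) * (1 / (1 - q) ^ (k + 1 + 1))
      = ((k : ℝ) + 1) * q / (1 - q) := by
    rw [pow_succ]
    field_simp
    ring
  rw [he] at H3
  have H4 : HasSum (fun n : ℕ => ((n : ℝ) + 1) * cc (k + 1) q n)
      (((k : ℝ) + 1) * q / (1 - q)) := by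
    convert H3 using 2 with n
    · rfl
    unfold cc
    simp only [Nat.add_sub_cancel]
    have hch : ((n + (k + 1)).choose (k + 1)) * (k + 1) = ((n + (k + 1)).choose k) * (n + 1) := by
      have := Nat.choose_succ_right_eq (n + (k + 1)) k
      have h2 : n + (k + 1) - k = n + 1 := by omega
      rw [h2] at this
      exact this
    have hchR : (((n + (k + 1)).choose (k + 1)) : ℝ) * ((k : ℝ) + 1)
        = (((n + (k + 1)).choose k) : ℝ) * ((n : ℝ) + 1) := by exact_mod_cast hch
    rw [pow_succ q n]
    linear_combination (q ^ n * q * (1 - q) ^ (k + 1)) * hchR.symm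
  convert H4 using 2
  push_cast
  ring

lemma pascalG_eq (m : ℕ) (q : ℝ) :
    pascalG m q = fun z => z + ∑' n : ℕ, (cc m q n : ℂ) * z ^ (n + 2) / ((n : ℂ) + 2) := by
  funext z
  unfold pascalG
  congr 1
  apply tsum_congr
  intro n
  unfold cc
  push_cast
  ring

def gg1 (m : ℕ) (q : ℝ) (z : ℂ) : ℂ := ∑' n : ℕ, (cc m q n : ℂ) * z ^ (n + 1)

def gg2 (m : ℕ) (q : ℝ) (z : ℂ) : ℂ := ∑' n : ℕ, (cc m q n : ℂ) * ((n : ℂ) + 1) * z ^ n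

lemma term_hasDerivAt (m : ℕ) (q : ℝ) (n : ℕ) (z : ℂ) :
    HasDerivAt (fun w : ℂ => (cc m q n : ℂ) * w ^ (n + 2) / ((n : ℂ) + 2))
      ((cc m q n : ℂ) * z ^ (n + 1)) z := by
  have h2 : ((n : ℂ) + 2) ≠ 0 := by
    have : ((n : ℂ) + 2) = ((n + 2 : ℕ) : ℂ) := by push_cast; ring
    rw [this, Ne, Nat.cast_eq_zero]
    omega
  have H := ((hasDerivAt_pow (n + 2) z).const_mul ((cc m q n : ℂ))).div_const ((n : ℂ) + 2)
  convert H using 1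
  · rfl
  · rfl
  have h3 : n + 2 - 1 = n + 1 := by omega
  rw [h3]
  field_simp
  push_cast
  ring

lemma norm_coeff (m : ℕ) {q : ℝ} (hq0 : 0 < q) (hq1 : q < 1) (n : ℕ) :
    ‖((cc m q n : ℝ) : ℂ)‖ = cc m q n := by
  rw [Complex.norm_real, Real.norm_eq_abs, _root_.abs_of_nonneg (cc_nonneg m hq0 hq1 n)]

lemma norm_natC (n : ℕ) : ‖((n : ℂ) + 1)‖ = (n : ℝ) + 1 := by
  have h : ((n : ℂ) + 1) = ((n + 1 : ℕ) : ℂ) := by push_cast; ring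
  rw [h, Complex.norm_natCast]
  push_cast; ring

lemma g1_hasDerivAt {m : ℕ} (hm : 1 ≤ m) {q : ℝ} (hq0 : 0 < q) (hq1 : q < 1)
    {z : ℂ} (hz : ‖z‖ < 1) : HasDerivAt (gg1 m q) (gg2 m q z) z := by
  have hu : Summable (fun n : ℕ => ((n : ℝ) + 1) * cc m q n) := (hasSum_cc' hm hq0 hq1).summable
  have hball : z ∈ Metric.ball (0 : ℂ) 1 := by
    simpa [Metric.mem_ball, dist_zero_right] using hz
  have h0 : (0 : ℂ) ∈ Metric.ball (0 : ℂ) 1 := by simp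
  refine hasDerivAt_tsum_of_isPreconnected hu Metric.isOpen_ball
    ((convex_ball (0 : ℂ) 1).isPreconnected)
    (g := fun n w => (cc m q n : ℂ) * w ^ (n + 1))
    (g' := fun n w => (cc m q n : ℂ) * ((n : ℂ) + 1) * w ^ n)
    ?_ ?_ h0 ?_ hball
  · intro n w _
    have H := (hasDerivAt_pow (n + 1) w).const_mul ((cc m q n : ℂ))
    convert H using 1
    · rfl
    simp only [Nat.add_sub_cancel]
    push_cast
    ring
  · intro n w hw
    rw [Metric.mem_ball, dist_zero_right] at hw
    have hcn := cc_nonneg m hq0 hq1 n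
    have heq : ‖(cc m q n : ℂ) * ((n : ℂ) + 1) * w ^ n‖ = cc m q n * (((n : ℝ) + 1) * ‖w‖ ^ n) := by
      rw [norm_mul, norm_mul, norm_pow, norm_coeff m hq0 hq1, norm_natC]
      ring
    rw [heq]
    calc cc m q n * (((n : ℝ) + 1) * ‖w‖ ^ n)
        ≤ cc m q n * (((n : ℝ) + 1) * 1) := by
          apply mul_le_mul_of_nonneg_left _ hcn
          apply mul_le_mul_of_nonneg_left _ (by positivity)
          exact pow_le_one₀ (norm_nonneg w) hw.le
      _ = ((n : ℝ) + 1) * cc m q n := by ring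
  · apply summable_zero.congr
    intro n
    simp

lemma G_hasDerivAt {m : ℕ} (hm : 1 ≤ m) {q : ℝ} (hq0 : 0 < q) (hq1 : q < 1)
    {z : ℂ} (hz : ‖z‖ < 1) : HasDerivAt (pascalG m q) (1 + gg1 m q z) z := by
  rw [pascalG_eq]
  have hu : Summable (cc m q) := (hasSum_cc hm hq0 hq1).summable
  have hball : z ∈ Metric.ball (0 : ℂ) 1 := by
    simpa [Metric.mem_ball, dist_zero_right] using hz
  have h0 : (0 : ℂ) ∈ Metric.ball (0 : ℂ) 1 := by simp
  have hT : HasDerivAt (fun w : ℂ => ∑' n : ℕ, (cc m q n : ℂ) * w ^ (n + 2) / ((n : ℂ) + 2))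
      (gg1 m q z) z := by
    refine hasDerivAt_tsum_of_isPreconnected hu Metric.isOpen_ball
      ((convex_ball (0 : ℂ) 1).isPreconnected)
      (g := fun n w => (cc m q n : ℂ) * w ^ (n + 2) / ((n : ℂ) + 2))
      (g' := fun n w => (cc m q n : ℂ) * w ^ (n + 1))
      (fun n w _ => term_hasDerivAt m q n w) ?_ h0 ?_ hball
    · intro n w hw
      rw [Metric.mem_ball, dist_zero_right] at hw
      have hcn := cc_nonneg m hq0 hq1 n
      have heq : ‖(cc m q n : ℂ) * w ^ (n + 1)‖ = cc m q n * ‖w‖ ^ (n + 1) := by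
        rw [norm_mul, norm_pow, norm_coeff m hq0 hq1]
      rw [heq]
      calc cc m q n * ‖w‖ ^ (n + 1) ≤ cc m q n * 1 := by
            apply mul_le_mul_of_nonneg_left _ hcn
            exact pow_le_one₀ (norm_nonneg w) hw.le
        _ = cc m q n := by ring
    · apply summable_zero.congr
      intro n
      simp
  have hs := (hasDerivAt_id z).add hT
  exact hs

lemma norm_natC2 (n : ℕ) : ‖((n : ℂ) + 2)‖ = (n : ℝ) + 2 := by
  have h : ((n : ℂ) + 2) = ((n + 2 : ℕ) : ℂ) := by push_cast; ring
  rw [h, Complex.norm_natCast]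
  push_cast; ring

lemma summable_gterm {m : ℕ} (hm : 1 ≤ m) {q : ℝ} (hq0 : 0 < q) (hq1 : q < 1)
    {z : ℂ} (hz : ‖z‖ ≤ 1) :
    Summable (fun n : ℕ => (cc m q n : ℂ) * z ^ (n + 2) / ((n : ℂ) + 2)) := by
  apply Summable.of_norm_bounded (hasSum_cc hm hq0 hq1).summable
  intro n
  have hcn := cc_nonneg m hq0 hq1 n
  rw [norm_div, norm_mul, norm_pow, norm_coeff m hq0 hq1, norm_natC2]
  have h1 : ‖z‖ ^ (n + 2) ≤ 1 := pow_le_one₀ (norm_nonneg z) hz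
  have h2 : (1 : ℝ) ≤ (n : ℝ) + 2 := by
    have := Nat.cast_nonneg (α := ℝ) n
    linarith
  calc cc m q n * ‖z‖ ^ (n + 2) / ((n : ℝ) + 2)
      ≤ cc m q n * 1 / 1 := by
        apply div_le_div₀ (by positivity) (by nlinarith) (by norm_num) h2
    _ = cc m q n := by ring

lemma norm_gg1_le {m : ℕ} (hm : 1 ≤ m) {q : ℝ} (hq0 : 0 < q) (hq1 : q < 1)
    {z : ℂ} (hz : ‖z‖ < 1) : ‖gg1 m q z‖ ≤ ‖z‖ * (1 - (1 - q) ^ m) := by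
  have hu := (hasSum_cc hm hq0 hq1).summable
  have hnorm : ∀ n : ℕ, ‖(cc m q n : ℂ) * z ^ (n + 1)‖ = cc m q n * ‖z‖ ^ (n + 1) := by
    intro n; rw [norm_mul, norm_pow, norm_coeff m hq0 hq1]
  have hle : ∀ n : ℕ, cc m q n * ‖z‖ ^ (n + 1) ≤ cc m q n * ‖z‖ := by
    intro n
    apply mul_le_mul_of_nonneg_left _ (cc_nonneg m hq0 hq1 n)
    calc ‖z‖ ^ (n + 1) ≤ ‖z‖ ^ 1 :=
          pow_le_pow_of_le_one (norm_nonneg z) hz.le (by omega)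
      _ = ‖z‖ := pow_one _
  have hsn : Summable (fun n : ℕ => ‖(cc m q n : ℂ) * z ^ (n + 1)‖) := by
    apply Summable.of_nonneg_of_le (fun n => norm_nonneg _) _ (hu.mul_right ‖z‖)
    intro n
    rw [hnorm n]
    exact hle n
  calc ‖gg1 m q z‖ ≤ ∑' n, ‖(cc m q n : ℂ) * z ^ (n + 1)‖ := norm_tsum_le_tsum_norm hsn
    _ ≤ ∑' n, cc m q n * ‖z‖ := by
        apply Summable.tsum_le_tsum _ hsn (hu.mul_right ‖z‖)
        intro n
        rw [hnorm n]
        exact hle n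
    _ = ‖z‖ * (1 - (1 - q) ^ m) := by
        rw [((hasSum_cc hm hq0 hq1).mul_right ‖z‖).tsum_eq]
        ring

lemma norm_gg2_le {m : ℕ} (hm : 1 ≤ m) {q : ℝ} (hq0 : 0 < q) (hq1 : q < 1)
    {z : ℂ} (hz : ‖z‖ < 1) : ‖gg2 m q z‖ ≤ m * q / (1 - q) := by
  have hu := (hasSum_cc' hm hq0 hq1).summable
  have hnorm : ∀ n : ℕ, ‖(cc m q n : ℂ) * ((n : ℂ) + 1) * z ^ n‖
      = cc m q n * (((n : ℝ) + 1) * ‖z‖ ^ n) := by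
    intro n
    rw [norm_mul, norm_mul, norm_pow, norm_coeff m hq0 hq1, norm_natC]
    ring
  have hle : ∀ n : ℕ, cc m q n * (((n : ℝ) + 1) * ‖z‖ ^ n) ≤ ((n : ℝ) + 1) * cc m q n := by
    intro n
    have := cc_nonneg m hq0 hq1 n
    have h1 : ‖z‖ ^ n ≤ 1 := pow_le_one₀ (norm_nonneg z) hz.le
    have h2 : (0:ℝ) ≤ (n : ℝ) + 1 := by positivity
    nlinarith [mul_nonneg (mul_nonneg this h2) (sub_nonneg.2 h1)]
  have hsn : Summable (fun n : ℕ => ‖(cc m q n : ℂ) * ((n : ℂ) + 1) * z ^ n‖) := by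
    apply Summable.of_nonneg_of_le (fun n => norm_nonneg _) _ hu
    intro n
    rw [hnorm n]
    exact hle n
  calc ‖gg2 m q z‖ ≤ ∑' n, ‖(cc m q n : ℂ) * ((n : ℂ) + 1) * z ^ n‖ :=
        norm_tsum_le_tsum_norm hsn
    _ ≤ ∑' n : ℕ, ((n : ℝ) + 1) * cc m q n := by
        apply Summable.tsum_le_tsum _ hsn hu
        intro n
        rw [hnorm n]
        exact hle n
    _ = m * q / (1 - q) := (hasSum_cc' hm hq0 hq1).tsum_eq

lemma deriv_pascalG_eq {m : ℕ} (hm : 1 ≤ m) {q : ℝ} (hq0 : 0 < q) (hq1 : q < 1)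
    {z : ℂ} (hz : ‖z‖ < 1) : deriv (pascalG m q) z = 1 + gg1 m q z :=
  (G_hasDerivAt hm hq0 hq1 hz).deriv

lemma deriv2_pascalG_eq {m : ℕ} (hm : 1 ≤ m) {q : ℝ} (hq0 : 0 < q) (hq1 : q < 1)
    {z : ℂ} (hz : ‖z‖ < 1) : deriv (deriv (pascalG m q)) z = gg2 m q z := by
  have hball : z ∈ Metric.ball (0 : ℂ) 1 := by
    simpa [Metric.mem_ball, dist_zero_right] using hz
  have hev : deriv (pascalG m q) =ᶠ[nhds z] (fun w => 1 + gg1 m q w) := by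
    filter_upwards [Metric.isOpen_ball.mem_nhds hball] with w hw
    exact (G_hasDerivAt hm hq0 hq1
      (by simpa [Metric.mem_ball, dist_zero_right] using hw)).deriv
  rw [hev.deriv_eq]
  exact ((g1_hasDerivAt hm hq0 hq1 hz).const_add 1).deriv

lemma pascalG_zero (m : ℕ) (q : ℝ) : pascalG m q 0 = 0 := by
  rw [pascalG_eq]
  simp

lemma gg1_zero (m : ℕ) (q : ℝ) : gg1 m q 0 = 0 := by
  unfold gg1
  simp

lemma norm_pow_sub_pow_le (a b : ℂ) (ha : ‖a‖ ≤ 1) (hb : ‖b‖ ≤ 1) (k : ℕ) :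
    ‖a ^ k - b ^ k‖ ≤ k * ‖a - b‖ := by
  induction k with
  | zero => simp
  | succ k ih =>
    have hsplit : a ^ (k + 1) - b ^ (k + 1) = a ^ k * (a - b) + (a ^ k - b ^ k) * b := by ring
    rw [hsplit]
    have h1 : ‖a ^ k * (a - b)‖ ≤ 1 * ‖a - b‖ := by
      rw [norm_mul]
      apply mul_le_mul_of_nonneg_right _ (norm_nonneg _)
      rw [norm_pow]
      exact pow_le_one₀ (norm_nonneg a) ha
    have h2 : ‖(a ^ k - b ^ k) * b‖ ≤ (k * ‖a - b‖) * 1 := by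
      rw [norm_mul]
      exact mul_le_mul ih hb (norm_nonneg b) (by positivity)
    calc ‖a ^ k * (a - b) + (a ^ k - b ^ k) * b‖
        ≤ ‖a ^ k * (a - b)‖ + ‖(a ^ k - b ^ k) * b‖ := norm_add_le _ _
      _ ≤ 1 * ‖a - b‖ + (k * ‖a - b‖) * 1 := add_le_add h1 h2
      _ = (k + 1 : ℕ) * ‖a - b‖ := by push_cast; ring

lemma injOn_G {m : ℕ} (hm : 1 ≤ m) {q : ℝ} (hq0 : 0 < q) (hq1 : q < 1) :
    Set.InjOn (pascalG m q) (Metric.ball (0 : ℂ) 1) := by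
  intro z1 h1 z2 h2 hf
  by_contra hne
  rw [Metric.mem_ball, dist_zero_right] at h1 h2
  have hS0lt : 1 - (1 - q) ^ m < 1 := by
    have h1q : (0:ℝ) < 1 - q := by linarith
    have : (0:ℝ) < (1 - q) ^ m := by positivity
    linarith
  have hsum1 := summable_gterm hm hq0 hq1 h1.le
  have hsum2 := summable_gterm hm hq0 hq1 h2.le
  have hdiffle : ∀ n : ℕ, ‖(cc m q n : ℂ) * z1 ^ (n + 2) / ((n : ℂ) + 2)
      - (cc m q n : ℂ) * z2 ^ (n + 2) / ((n : ℂ) + 2)‖ ≤ cc m q n * ‖z1 - z2‖ := by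
    intro n
    have hcn := cc_nonneg m hq0 hq1 n
    have heq : (cc m q n : ℂ) * z1 ^ (n + 2) / ((n : ℂ) + 2)
        - (cc m q n : ℂ) * z2 ^ (n + 2) / ((n : ℂ) + 2)
        = (cc m q n : ℂ) * (z1 ^ (n + 2) - z2 ^ (n + 2)) / ((n : ℂ) + 2) := by ring
    rw [heq, norm_div, norm_mul, norm_coeff m hq0 hq1, norm_natC2]
    have hp := norm_pow_sub_pow_le z1 z2 h1.le h2.le (n + 2)
    have hn2 : (0:ℝ) < (n : ℝ) + 2 := by
      have := Nat.cast_nonneg (α := ℝ) n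
      linarith
    rw [div_le_iff₀ hn2]
    calc cc m q n * ‖z1 ^ (n + 2) - z2 ^ (n + 2)‖
        ≤ cc m q n * (((n : ℝ) + 2) * ‖z1 - z2‖) := by
          apply mul_le_mul_of_nonneg_left _ hcn
          calc ‖z1 ^ (n + 2) - z2 ^ (n + 2)‖ ≤ ((n + 2 : ℕ) : ℝ) * ‖z1 - z2‖ := hp
            _ = ((n : ℝ) + 2) * ‖z1 - z2‖ := by push_cast; ring
      _ = cc m q n * ‖z1 - z2‖ * ((n : ℝ) + 2) := by ring
  have hdsum : Summable (fun n : ℕ => (cc m q n : ℂ) * z1 ^ (n + 2) / ((n : ℂ) + 2)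
      - (cc m q n : ℂ) * z2 ^ (n + 2) / ((n : ℂ) + 2)) := hsum1.sub hsum2
  have hGdiff : z1 + (∑' n : ℕ, (cc m q n : ℂ) * z1 ^ (n + 2) / ((n : ℂ) + 2))
      = z2 + (∑' n : ℕ, (cc m q n : ℂ) * z2 ^ (n + 2) / ((n : ℂ) + 2)) := by
    have h := hf
    rw [pascalG_eq] at h
    simpa using h
  have hkey : (z1 - z2) + (∑' n : ℕ, ((cc m q n : ℂ) * z1 ^ (n + 2) / ((n : ℂ) + 2)
      - (cc m q n : ℂ) * z2 ^ (n + 2) / ((n : ℂ) + 2))) = 0 := by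
    rw [Summable.tsum_sub hsum1 hsum2]
    linear_combination hGdiff
  have hzne : (0:ℝ) < ‖z1 - z2‖ := by
    rw [norm_pos_iff]
    exact sub_ne_zero.2 hne
  have hsn : Summable (fun n : ℕ => ‖(cc m q n : ℂ) * z1 ^ (n + 2) / ((n : ℂ) + 2)
      - (cc m q n : ℂ) * z2 ^ (n + 2) / ((n : ℂ) + 2)‖) := by
    apply Summable.of_nonneg_of_le (fun n => norm_nonneg _) hdiffle
      (((hasSum_cc hm hq0 hq1).summable).mul_right ‖z1 - z2‖)
  have hDelta : ‖∑' n : ℕ, ((cc m q n : ℂ) * z1 ^ (n + 2) / ((n : ℂ) + 2)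
      - (cc m q n : ℂ) * z2 ^ (n + 2) / ((n : ℂ) + 2))‖ ≤ (1 - (1 - q) ^ m) * ‖z1 - z2‖ := by
    calc ‖∑' n : ℕ, ((cc m q n : ℂ) * z1 ^ (n + 2) / ((n : ℂ) + 2)
        - (cc m q n : ℂ) * z2 ^ (n + 2) / ((n : ℂ) + 2))‖
        ≤ ∑' n : ℕ, ‖(cc m q n : ℂ) * z1 ^ (n + 2) / ((n : ℂ) + 2)
          - (cc m q n : ℂ) * z2 ^ (n + 2) / ((n : ℂ) + 2)‖ := norm_tsum_le_tsum_norm hsn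
      _ ≤ ∑' n : ℕ, cc m q n * ‖z1 - z2‖ := Summable.tsum_le_tsum hdiffle hsn
          (((hasSum_cc hm hq0 hq1).summable).mul_right ‖z1 - z2‖)
      _ = (1 - (1 - q) ^ m) * ‖z1 - z2‖ := ((hasSum_cc hm hq0 hq1).mul_right ‖z1 - z2‖).tsum_eq
  have hfinal : ‖z1 - z2‖ ≤ (1 - (1 - q) ^ m) * ‖z1 - z2‖ := by
    have h0 : z1 - z2 = -(∑' n : ℕ, ((cc m q n : ℂ) * z1 ^ (n + 2) / ((n : ℂ) + 2)
        - (cc m q n : ℂ) * z2 ^ (n + 2) / ((n : ℂ) + 2))) := by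
      linear_combination hkey
    calc ‖z1 - z2‖ = ‖-(∑' n : ℕ, ((cc m q n : ℂ) * z1 ^ (n + 2) / ((n : ℂ) + 2)
        - (cc m q n : ℂ) * z2 ^ (n + 2) / ((n : ℂ) + 2)))‖ := by rw [← h0]
      _ = ‖∑' n : ℕ, ((cc m q n : ℂ) * z1 ^ (n + 2) / ((n : ℂ) + 2)
        - (cc m q n : ℂ) * z2 ^ (n + 2) / ((n : ℂ) + 2))‖ := norm_neg _
      _ ≤ (1 - (1 - q) ^ m) * ‖z1 - z2‖ := hDelta
  nlinarith [hfinal, hzne, hS0lt]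

lemma key_ineq {m : ℕ} (hm : 1 ≤ m) {q ξ ρ γ : ℝ} (hq0 : 0 < q) (hq1 : q < 1)
    (hcos : 0 < Real.cos ξ) (hγ1 : γ < 1)
    (h : ((1 - ρ) * (Real.cos ξ)⁻¹ + ρ * (1 - γ)) * (q * m / (1 - q) ^ (m + 1)) ≤ 1 - γ) :
    (1 - ρ) * (m * q / (1 - q)) ≤
      (1 - γ) * Real.cos ξ * (1 - ((1 - (1 - q) ^ m) + ρ * (m * q / (1 - q)))) := by
  have h1q : (0:ℝ) < 1 - q := by linarith
  have hA : (0:ℝ) < (1 - q) ^ m := by positivity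
  have hY : q * m / (1 - q) ^ (m + 1) = (m * q / (1 - q)) / (1 - q) ^ m := by
    rw [pow_succ]
    field_simp
  rw [hY] at h
  set c := Real.cos ξ with hc
  set S1 := m * q / (1 - q) with hS1
  have h2 : ((1 - ρ) * c⁻¹ + ρ * (1 - γ)) * S1 ≤ (1 - γ) * (1 - q) ^ m := by
    have hmul := mul_le_mul_of_nonneg_right h hA.le
    calc ((1 - ρ) * c⁻¹ + ρ * (1 - γ)) * S1
        = ((1 - ρ) * c⁻¹ + ρ * (1 - γ)) * (S1 / (1 - q) ^ m) * (1 - q) ^ m := by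
          field_simp
      _ ≤ (1 - γ) * (1 - q) ^ m := hmul
  have h3 := mul_le_mul_of_nonneg_right h2 hcos.le
  have h4 : (1 - ρ) * S1 + ρ * (1 - γ) * c * S1 ≤ (1 - γ) * (1 - q) ^ m * c := by
    calc (1 - ρ) * S1 + ρ * (1 - γ) * c * S1
        = (((1 - ρ) * c⁻¹ + ρ * (1 - γ)) * S1) * c := by
          field_simp
      _ ≤ (1 - γ) * (1 - q) ^ m * c := h3
  nlinarith [h4]

lemma main_re {m : ℕ} (hm : 1 ≤ m) {q ξ ρ γ : ℝ} (hq0 : 0 < q) (hq1 : q < 1)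
    (hξ : |ξ| < π / 2) (hρ0 : 0 ≤ ρ) (hρ1 : ρ < 1) (hγ0 : 0 ≤ γ) (hγ1 : γ < 1)
    (h : ((1 - ρ) * (Real.cos ξ)⁻¹ + ρ * (1 - γ)) * (q * m / (1 - q) ^ (m + 1)) ≤ 1 - γ)
    {z : ℂ} (hz : ‖z‖ < 1) :
    (1 + gg1 m q z) + (ρ : ℂ) * z * gg2 m q z ≠ 0 ∧
    γ * Real.cos ξ <
      (Complex.exp (Complex.I * ξ) * (z * gg2 m q z + (1 + gg1 m q z)) /
        ((1 + gg1 m q z) + (ρ : ℂ) * z * gg2 m q z)).re := by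
  have hcos : 0 < Real.cos ξ := by
    rcases abs_lt.1 hξ with ⟨hl, hr⟩
    exact Real.cos_pos_of_mem_Ioo ⟨hl, hr⟩
  have h1q : (0:ℝ) < 1 - q := by linarith
  have hA : (0:ℝ) < (1 - q) ^ m := by positivity
  have hA1 : (1 - q) ^ m ≤ 1 := pow_le_one₀ h1q.le (by linarith)
  set S0 : ℝ := 1 - (1 - q) ^ m with hS0def
  set S1 : ℝ := m * q / (1 - q) with hS1def
  have hS0n : 0 ≤ S0 := by simp only [hS0def]; linarith
  have hS1pos : 0 < S1 := by
    have hm' : (1:ℝ) ≤ (m : ℝ) := by exact_mod_cast hm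
    apply div_pos (by nlinarith) h1q
  set T : ℝ := S0 + ρ * S1 with hTdef
  have hTn : 0 ≤ T := by positivity
  have hkey := key_ineq hm hq0 hq1 hcos hγ1 h
  rw [← hS1def, ← hS0def, ← hTdef] at hkey
  have hT1 : T < 1 := by
    by_contra hcon
    push_neg at hcon
    have p1 : 0 < (1 - ρ) * S1 := mul_pos (by linarith) hS1pos
    have p2 : (1 - γ) * Real.cos ξ * (1 - T) ≤ 0 :=
      mul_nonpos_of_nonneg_of_nonpos (mul_nonneg (by linarith) hcos.le) (by linarith)
    linarith
  set D : ℂ := (1 + gg1 m q z) + (ρ : ℂ) * z * gg2 m q z with hDdef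
  have hg1 := norm_gg1_le hm hq0 hq1 hz
  have hg2 := norm_gg2_le hm hq0 hq1 hz
  rw [← hS0def] at hg1
  rw [← hS1def] at hg2
  set w : ℂ := ((1 : ℂ) - (ρ : ℂ)) * z * gg2 m q z with hwdef
  have hnw : ‖w‖ ≤ (1 - ρ) * (‖z‖ * S1) := by
    rw [hwdef, norm_mul, norm_mul]
    have h1 : ‖(1 : ℂ) - (ρ : ℂ)‖ = 1 - ρ := by
      rw [show (1 : ℂ) - (ρ : ℂ) = ((1 - ρ : ℝ) : ℂ) by push_cast; ring,
        Complex.norm_real, Real.norm_eq_abs, _root_.abs_of_nonneg (by linarith)]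
    rw [h1, mul_assoc]
    apply mul_le_mul_of_nonneg_left _ (by linarith)
    exact mul_le_mul_of_nonneg_left hg2 (norm_nonneg z)
  have hnv : ‖gg1 m q z + (ρ : ℂ) * z * gg2 m q z‖ ≤ ‖z‖ * T := by
    have hρn : ‖(ρ : ℂ)‖ = ρ := by
      rw [Complex.norm_real, Real.norm_eq_abs, _root_.abs_of_nonneg hρ0]
    calc ‖gg1 m q z + (ρ : ℂ) * z * gg2 m q z‖
        ≤ ‖gg1 m q z‖ + ‖(ρ : ℂ) * z * gg2 m q z‖ := norm_add_le _ _
      _ ≤ ‖z‖ * S0 + ρ * (‖z‖ * S1) := by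
          apply add_le_add hg1
          rw [norm_mul, norm_mul, hρn, mul_assoc]
          apply mul_le_mul_of_nonneg_left _ hρ0
          exact mul_le_mul_of_nonneg_left hg2 (norm_nonneg z)
      _ = ‖z‖ * T := by rw [hTdef]; ring
  have hDlow : 1 - ‖z‖ * T ≤ ‖D‖ := by
    have htr : ‖(1 : ℂ)‖ ≤ ‖D‖ + ‖gg1 m q z + (ρ : ℂ) * z * gg2 m q z‖ := by
      calc ‖(1 : ℂ)‖ = ‖D - (gg1 m q z + (ρ : ℂ) * z * gg2 m q z)‖ := by
            rw [hDdef]; ring_nf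
        _ ≤ ‖D‖ + ‖gg1 m q z + (ρ : ℂ) * z * gg2 m q z‖ := norm_sub_le _ _
    rw [norm_one] at htr
    linarith
  have hzT : ‖z‖ * T ≤ T := by
    nlinarith [norm_nonneg z]
  have hDpos : 0 < ‖D‖ := by linarith
  have hDne : D ≠ 0 := by
    intro h0
    rw [h0, norm_zero] at hDpos
    exact lt_irrefl _ hDpos
  refine ⟨hDne, ?_⟩
  set E : ℂ := Complex.exp (Complex.I * ξ) with hEdef
  have hEalt : E = Complex.exp ((ξ : ℂ) * Complex.I) := by rw [hEdef, mul_comm]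
  have hEre : E.re = Real.cos ξ := by rw [hEalt]; exact Complex.exp_ofReal_mul_I_re ξ
  have hEnorm : ‖E‖ = 1 := by
    rw [hEalt, Complex.norm_exp_ofReal_mul_I]
  have hsplit : E * (z * gg2 m q z + (1 + gg1 m q z)) / D = E + E * w / D := by
    field_simp
    rw [hDdef, hwdef]
    ring
  rw [hsplit, Complex.add_re]
  have hwD : ‖w‖ < (1 - γ) * Real.cos ξ * ‖D‖ := by
    have s1 : ‖w‖ ≤ ‖z‖ * ((1 - γ) * Real.cos ξ * (1 - T)) := by
      calc ‖w‖ ≤ (1 - ρ) * (‖z‖ * S1) := hnw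
        _ = ‖z‖ * ((1 - ρ) * S1) := by ring
        _ ≤ ‖z‖ * ((1 - γ) * Real.cos ξ * (1 - T)) :=
            mul_le_mul_of_nonneg_left hkey (norm_nonneg z)
    have s2 : ‖z‖ * ((1 - γ) * Real.cos ξ * (1 - T)) < (1 - γ) * Real.cos ξ * (1 - ‖z‖ * T) := by
      have e : (1 - γ) * Real.cos ξ * (1 - ‖z‖ * T) - ‖z‖ * ((1 - γ) * Real.cos ξ * (1 - T))
          = (1 - γ) * Real.cos ξ * (1 - ‖z‖) := by ring
      have pos : 0 < (1 - γ) * Real.cos ξ * (1 - ‖z‖) :=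
        mul_pos (mul_pos (by linarith) hcos) (by linarith)
      linarith
    have s3 : (1 - γ) * Real.cos ξ * (1 - ‖z‖ * T) ≤ (1 - γ) * Real.cos ξ * ‖D‖ :=
      mul_le_mul_of_nonneg_left hDlow (by nlinarith)
    linarith
  have hrelow : -(‖E * w / D‖) ≤ (E * w / D).re := by
    have h1 := Complex.abs_re_le_norm (E * w / D)
    cases' abs_le.1 h1 with hl hr
    linarith [neg_abs_le ((E * w / D).re)]
  have hnormq : ‖E * w / D‖ = ‖w‖ / ‖D‖ := by
    rw [norm_div, norm_mul, hEnorm, one_mul]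
  have hq : ‖w‖ / ‖D‖ < (1 - γ) * Real.cos ξ := by
    rw [div_lt_iff₀ hDpos]
    exact hwD
  rw [hEre]
  rw [hnormq] at hrelow
  linarith

/-- Theorem 5, `𝒢_q^m ∈ 𝒦(ξ, γ, ρ)`. -/
theorem stmt9 (m : ℕ) (hm : 1 ≤ m) (q : ℝ) (hq0 : 0 < q) (hq1 : q < 1)
    (ξ ρ γ : ℝ) (hξ : |ξ| < π / 2) (hρ0 : 0 ≤ ρ) (hρ1 : ρ < 1)
    (hγ0 : 0 ≤ γ) (hγ1 : γ < 1)
    (h : ((1 - ρ) * (Real.cos ξ)⁻¹ + ρ * (1 - γ)) * (q * m / (1 - q) ^ (m + 1)) ≤ 1 - γ) :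
    SpiralK ξ γ ρ (pascalG m q) := by
  have hmem : ∀ w : ℂ, w ∈ unitDisk → ‖w‖ < 1 := by
    intro w hwm
    rwa [unitDisk, Metric.mem_ball, dist_zero_right] at hwm
  refine ⟨⟨?_, ?_, ?_⟩, ?_, ?_⟩
  · have hdiff : DifferentiableOn ℂ (pascalG m q) unitDisk := by
      intro w hwm
      exact ((G_hasDerivAt hm hq0 hq1 (hmem w hwm)).differentiableAt).differentiableWithinAt
    exact (hdiff.analyticOnNhd (by rw [unitDisk]; exact Metric.isOpen_ball)).analyticOn
  · exact pascalG_zero m q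
  · rw [deriv_pascalG_eq hm hq0 hq1 (by simp : ‖(0:ℂ)‖ < 1), gg1_zero]
    norm_num
  · exact injOn_G hm hq0 hq1
  · intro z hzm
    have hz := hmem z hzm
    rw [deriv_pascalG_eq hm hq0 hq1 hz, deriv2_pascalG_eq hm hq0 hq1 hz]
    exact main_re hm hq0 hq1 hξ hρ0 hρ1 hγ0 hγ1 h hz
end
end
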